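/- arXiv:2601.21882 — 10 statements merged into one kernel-verified Lean document; each statement's English description precedes it below -/
import Mathlib

section
/- There exists a function f : ℝ → ℝ such that the induced map on finite multisets of reals, sending a multiset {r₁, ..., r_k} to the sum Σᵢ f(rᵢ), is injective (i.e., two finite multisets of reals with equal sums of f-values must be equal as multisets). -/
open Cardinal

/-- There exists a moment-injective function `f : ℝ → ℝ`: the induced map on finite
multisets of reals, sending `{r₁, …, r_k}` to `Σᵢ f rᵢ`, is injective. -/
theorem exists_moment_injective_real :
    ∃ f : ℝ → ℝ, Function.Injective (fun m : Multiset ℝ => (m.map f).sum) := by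
  set B := Module.Basis.ofVectorSpace ℚ ℝ
  have hcard : #(Module.Basis.ofVectorSpaceIndex ℚ ℝ) = #ℝ := by
    rw [B.mk_eq_rank'', Real.rank_rat_real, Cardinal.mk_real]
  obtain ⟨e⟩ := Cardinal.eq.mp hcard.symm
  refine ⟨fun r => B (e r), fun m m' h => ?_⟩
  simp only at h
  have hrep : ∀ (m : Multiset ℝ) (a : ℝ),
      (B.repr ((m.map fun r => B (e r)).sum)) (e a) = (m.count a : ℚ) := by
    intro m a
    rw [map_multiset_sum, Multiset.map_map]
    rw [← Finsupp.applyAddHom_apply, AddMonoidHom.map_multiset_sum, Multiset.map_map]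
    have : ∀ r : ℝ, (Finsupp.applyAddHom (e a) ∘ B.repr ∘ fun r => B (e r)) r
        = if r = a then (1 : ℚ) else 0 := by
      intro r
      simp only [Function.comp_apply, Finsupp.applyAddHom_apply, Module.Basis.repr_self,
        Finsupp.single_apply, EmbeddingLike.apply_eq_iff_eq]
    rw [Multiset.map_congr rfl (fun r _ => this r)]
    induction m using Multiset.induction with
    | empty => simp
    | cons b s ih =>
      rw [Multiset.map_cons, Multiset.sum_cons, ih, Multiset.count_cons]
      by_cases hba : b = a
      · simp [hba, add_comm]
      · rw [if_neg hba, if_neg (fun h : a = b => hba h.symm)]; push_cast; ring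
  refine Multiset.ext.mpr fun a => ?_
  have := hrep m a
  rw [h, hrep m' a] at this
  exact_mod_cast this.symm
end

section
/- The map from finite multisets of natural numbers to ℝ sending {n₁,...,n_k} to Σᵢ e^{nᵢ} is injective. -/
open Polynomial Finset Nat

lemma iter_deriv_add (j : ℕ) (f g : ℤ[X]) :
    derivative^[j] (f + g) = derivative^[j] f + derivative^[j] g := by
  induction j generalizing f g with
  | zero => simp
  | succ j ih => simp [Function.iterate_succ_apply, derivative_add, ih]

lemma fact_dvd_iterate_deriv (g : ℤ[X]) (j : ℕ) (k : ℤ) :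
    (j ! : ℤ) ∣ (derivative^[j] g).eval k := by
  have h2 : derivative^[j] g = j ! • (hasseDeriv j g) := by
    rw [← Polynomial.factorial_smul_hasseDeriv (R := ℤ) j]; simp
  rw [h2]
  simp [nsmul_eq_mul]

lemma iterate_deriv_eval_eq_zero {c : ℤ} {m : ℕ} {g : ℤ[X]} (hdvd : (X - C c) ^ m ∣ g)
    {j : ℕ} (hj : j < m) : (derivative^[j] g).eval c = 0 := by
  obtain ⟨q, hq⟩ := Polynomial.pow_sub_dvd_iterate_derivative_of_pow_dvd j hdvd
  rw [hq]
  have : m - j = (m - j - 1) + 1 := by omega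
  rw [this]
  simp [pow_succ, mul_assoc]

lemma iterate_deriv_X_pow_mul_eval_zero (j : ℕ) (w : ℤ[X]) :
    (derivative^[j] (X ^ j * w)).eval 0 = (j ! : ℤ) * w.eval 0 := by
  induction j generalizing w with
  | zero => simp
  | succ j ih =>
    rw [Function.iterate_succ_apply]
    have hd : derivative (X ^ (j+1) * w) = C ((j:ℤ)+1) * (X ^ j * w) + X ^ (j+1) * derivative w := by
      rw [derivative_mul, derivative_X_pow]
      push_cast
      ring
    rw [hd, iter_deriv_add, eval_add]
    have h1 : (derivative^[j] (C ((j:ℤ)+1) * (X ^ j * w))).eval 0 = ((j:ℤ)+1) * ((j ! : ℤ) * w.eval 0) := by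
      have he : C ((j:ℤ)+1) * (X ^ j * w) = X ^ j * (C ((j:ℤ)+1) * w) := by ring
      rw [he, ih]
      simp [eval_mul]
      ring
    have h2 : (derivative^[j] (X ^ (j+1) * derivative w)).eval 0 = 0 := by
      have hdvd : (X - C (0:ℤ)) ^ (j+1) ∣ X ^ (j+1) * derivative w := by
        simp only [map_zero, sub_zero]
        exact Dvd.intro _ rfl
      exact iterate_deriv_eval_eq_zero hdvd (Nat.lt_succ_self j)
    rw [h1, h2]
    push_cast [Nat.factorial_succ]
    ring

section Hermite
variable (n p : ℕ)

noncomputable def fH : ℤ[X] := X ^ (p-1) * ∏ i ∈ Finset.range n, (X - C ((i:ℤ)+1)) ^ p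

noncomputable def FH : ℤ[X] := ∑ j ∈ Finset.range ((n+1)*p), derivative^[j] (fH n p)

lemma fH_natDegree (hp : 0 < p) : (fH n p).natDegree < (n+1)*p := by
  have h1 : (fH n p).natDegree = (p-1) + ∑ i ∈ Finset.range n, ((X - C ((i:ℤ)+1)) ^ p).natDegree := by
    unfold fH
    rw [Polynomial.natDegree_mul (pow_ne_zero _ X_ne_zero) (by
      apply Finset.prod_ne_zero_iff.2
      intro i _
      exact pow_ne_zero _ (X_sub_C_ne_zero _)), natDegree_X_pow, natDegree_prod]
    intro i _
    exact pow_ne_zero _ (X_sub_C_ne_zero _)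
  have h2 : ∀ i ∈ Finset.range n, ((X - C ((i:ℤ)+1)) ^ p).natDegree = p := by
    intro i _
    rw [natDegree_pow, natDegree_X_sub_C, mul_one]
  rw [h1, Finset.sum_congr rfl h2, Finset.sum_const, smul_eq_mul, Finset.card_range]
  have : p - 1 < p := Nat.sub_lt hp one_pos
  calc p - 1 + n * p < p + n * p := by omega
    _ = (n+1) * p := by ring

lemma FH_deriv (hp : 0 < p) : derivative (FH n p) = FH n p - fH n p := by
  unfold FH
  rw [derivative_sum]
  have h1 : ∀ j, derivative (derivative^[j] (fH n p)) = derivative^[j+1] (fH n p) := by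
    intro j; rw [Function.iterate_succ_apply']
  rw [Finset.sum_congr rfl (fun j _ => h1 j)]
  have h2 : ∑ j ∈ Finset.range ((n+1)*p), derivative^[j+1] (fH n p)
      = (∑ j ∈ Finset.range ((n+1)*p + 1), derivative^[j] (fH n p)) - fH n p := by
    rw [Finset.sum_range_succ' (fun j => derivative^[j] (fH n p))]
    simp
  rw [h2, Finset.sum_range_succ]
  rw [Polynomial.iterate_derivative_eq_zero (fH_natDegree n p hp)]
  abel

lemma FH_eval_pos_dvd (hp : 0 < p) {k : ℕ} (hk1 : 1 ≤ k) (hkn : k ≤ n) :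
    (p ! : ℤ) ∣ (FH n p).eval (k : ℤ) := by
  unfold FH
  rw [eval_finset_sum]
  apply Finset.dvd_sum
  intro j _
  rcases lt_or_ge j p with hj | hj
  · have hdvd : (X - C ((k:ℤ))) ^ p ∣ fH n p := by
      have hmem : k - 1 ∈ Finset.range n := by
        simp; omega
      have : (X - C (((k-1:ℕ):ℤ)+1)) ^ p ∣ ∏ i ∈ Finset.range n, (X - C ((i:ℤ)+1)) ^ p :=
        Finset.dvd_prod_of_mem _ hmem
      have hc : (((k-1:ℕ):ℤ)+1) = (k:ℤ) := by push_cast; omega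
      rw [hc] at this
      exact this.mul_left _
    rw [iterate_deriv_eval_eq_zero hdvd hj]
    exact dvd_zero _
  · exact dvd_trans (Int.natCast_dvd_natCast.2 (Nat.factorial_dvd_factorial hj)) (fact_dvd_iterate_deriv _ _ _)

lemma FH_eval_zero (hp : 0 < p) :
    ∃ M : ℤ, (FH n p).eval 0 =
      ((p-1)! : ℤ) * (∏ i ∈ Finset.range n, (-((i:ℤ)+1)) ^ p) + (p ! : ℤ) * M := by
  have hmem : p - 1 ∈ Finset.range ((n+1)*p) := by
    simp
    calc p - 1 < p := Nat.sub_lt hp one_pos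
      _ ≤ (n+1)*p := by nlinarith
  have hsplit : (FH n p).eval 0 = (derivative^[p-1] (fH n p)).eval 0
      + ∑ j ∈ (Finset.range ((n+1)*p)).erase (p-1), (derivative^[j] (fH n p)).eval 0 := by
    unfold FH
    rw [eval_finset_sum, (Finset.add_sum_erase _ (fun j => (derivative^[j] (fH n p)).eval 0) hmem)]
  have hmain : (derivative^[p-1] (fH n p)).eval 0
      = ((p-1)! : ℤ) * (∏ i ∈ Finset.range n, (-((i:ℤ)+1)) ^ p) := by
    unfold fH
    rw [iterate_deriv_X_pow_mul_eval_zero]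
    congr 1
    rw [eval_prod]
    apply Finset.prod_congr rfl
    intro i _
    simp
  have hdvd : (p ! : ℤ) ∣ ∑ j ∈ (Finset.range ((n+1)*p)).erase (p-1), (derivative^[j] (fH n p)).eval 0 := by
    apply Finset.dvd_sum
    intro j hj
    have hj' := Finset.mem_erase.1 hj
    rcases lt_or_ge j p with hjp | hjp
    · have hjlt : j < p - 1 := by omega
      have hdvd2 : (X - C (0:ℤ)) ^ (p-1) ∣ fH n p := by
        unfold fH
        simp only [map_zero, sub_zero]
        exact Dvd.intro _ rfl
      rw [iterate_deriv_eval_eq_zero hdvd2 hjlt]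
      exact dvd_zero _
    · exact dvd_trans (Int.natCast_dvd_natCast.2 (Nat.factorial_dvd_factorial hjp)) (fact_dvd_iterate_deriv _ _ _)
  obtain ⟨M, hM⟩ := hdvd
  exact ⟨M, by rw [hsplit, hmain, hM]⟩

end Hermite

section Analytic
open Real Set

noncomputable def FHr (n p : ℕ) : ℝ[X] := (FH n p).map (Int.castRingHom ℝ)
noncomputable def fHr (n p : ℕ) : ℝ[X] := (fH n p).map (Int.castRingHom ℝ)

lemma FHr_deriv (n p : ℕ) (hp : 0 < p) : derivative (FHr n p) = FHr n p - fHr n p := by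
  unfold FHr fHr
  rw [Polynomial.derivative_map, FH_deriv n p hp, Polynomial.map_sub]

lemma fHr_eval_bound (n p : ℕ) {x : ℝ} (hx : x ∈ Icc (0:ℝ) n) :
    |(fHr n p).eval x| ≤ ((n:ℝ)+1) ^ ((n+1)*p) := by
  have hc1 : (1:ℝ) ≤ (n:ℝ)+1 := by have : (0:ℝ) ≤ n := Nat.cast_nonneg n; linarith
  unfold fHr fH
  rw [Polynomial.map_mul, Polynomial.map_pow, Polynomial.map_X, Polynomial.map_prod]
  rw [eval_mul, eval_pow, eval_X, eval_prod, abs_mul, abs_pow]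
  have hxb : |x| ≤ (n:ℝ)+1 := by
    rw [abs_of_nonneg hx.1]
    exact le_trans hx.2 (by linarith)
  have hterm : ∀ i ∈ Finset.range n, |(((X - C ((i:ℤ)+1)) ^ p : ℤ[X]).map (Int.castRingHom ℝ)).eval x| ≤ ((n:ℝ)+1) ^ p := by
    intro i hi
    rw [Polynomial.map_pow, Polynomial.map_sub, Polynomial.map_X, Polynomial.map_C,
      eval_pow, eval_sub, eval_X, eval_C, abs_pow]
    have hC : ((Int.castRingHom ℝ) ((i:ℤ) + 1)) = (i:ℝ)+1 := by simp
    rw [hC]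
    apply pow_le_pow_left₀ (abs_nonneg _)
    have hi' : (i:ℝ) + 1 ≤ n := by
      have := Finset.mem_range.1 hi
      exact_mod_cast Nat.succ_le_of_lt this
    rw [abs_le]
    push_cast
    constructor <;> linarith [hx.1, hx.2, hi']
  calc |x| ^ (p-1) * |∏ i ∈ Finset.range n, (((X - C ((i:ℤ)+1)) ^ p : ℤ[X]).map (Int.castRingHom ℝ)).eval x|
      ≤ ((n:ℝ)+1) ^ (p-1) * ∏ i ∈ Finset.range n, ((n:ℝ)+1) ^ p := by
        apply mul_le_mul (pow_le_pow_left₀ (abs_nonneg _) hxb _) ?_ (abs_nonneg _) (by positivity)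
        rw [abs_prod]
        exact Finset.prod_le_prod (fun i _ => abs_nonneg _) hterm
    _ = ((n:ℝ)+1) ^ ((p-1) + p*n) := by
        rw [Finset.prod_const, Finset.card_range, ← pow_mul, ← pow_add]
    _ ≤ ((n:ℝ)+1) ^ ((n+1)*p) := by
        apply pow_le_pow_right₀ hc1
        have : p - 1 ≤ p := Nat.sub_le p 1
        nlinarith

lemma key_bound (n p : ℕ) (hp : 0 < p) (k : ℕ) (hk : k ≤ n) :
    |(((FH n p).eval (k:ℤ) : ℤ) : ℝ) - Real.exp k * (((FH n p).eval 0 : ℤ) : ℝ)|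
      ≤ Real.exp n * n * ((n:ℝ)+1) ^ ((n+1)*p) := by
  set B : ℝ := ((n:ℝ)+1) ^ ((n+1)*p) with hB
  have hB0 : 0 ≤ B := by positivity
  set g : ℝ → ℝ := fun x => Real.exp (-x) * (FHr n p).eval x with hg
  have hderiv : ∀ x : ℝ, HasDerivAt g (-(Real.exp (-x)) * (fHr n p).eval x) x := by
    intro x
    have h1 : HasDerivAt (fun x : ℝ => Real.exp (-x)) (-(Real.exp (-x))) x := by
      have := (Real.hasDerivAt_exp (-x)).comp x (hasDerivAt_neg x)
      simp at this
      exact this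
    have h2 : HasDerivAt (fun x : ℝ => (FHr n p).eval x) ((derivative (FHr n p)).eval x) x :=
      Polynomial.hasDerivAt _ x
    have := h1.mul h2
    convert this using 1
    · rfl
    · rfl
    · rfl
    rw [FHr_deriv n p hp]
    simp [eval_sub]
    ring
  have hbound : ∀ x ∈ Icc (0:ℝ) (k:ℝ), |(-(Real.exp (-x)) * (fHr n p).eval x)| ≤ B := by
    intro x hx
    rw [abs_mul, abs_neg, abs_of_nonneg (Real.exp_pos _).le]
    have h1 : Real.exp (-x) ≤ 1 := Real.exp_le_one_iff.2 (by linarith [hx.1])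
    have h2 : |(fHr n p).eval x| ≤ B := fHr_eval_bound n p ⟨hx.1, le_trans hx.2 (by exact_mod_cast hk)⟩
    calc Real.exp (-x) * |(fHr n p).eval x| ≤ 1 * B := by
          apply mul_le_mul h1 h2 (abs_nonneg _) zero_le_one
      _ = B := one_mul B
  have hmvt := norm_image_sub_le_of_norm_deriv_le_segment'
    (f := g) (f' := fun x => -(Real.exp (-x)) * (fHr n p).eval x) (a := 0) (b := (k:ℝ)) (C := B)
    (fun x hx => (hderiv x).hasDerivWithinAt)
    (fun x hx => hbound x (Ico_subset_Icc_self hx))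
    (k:ℝ) (right_mem_Icc.2 (by positivity))
  rw [Real.norm_eq_abs, sub_zero] at hmvt
  have hev : ∀ m : ℕ, (FHr n p).eval (m:ℝ) = (((FH n p).eval (m:ℤ) : ℤ) : ℝ) := by
    intro m
    unfold FHr
    rw [Polynomial.eval_map]
    have : ((m:ℤ):ℝ) = (m:ℝ) := by push_cast; rfl
    rw [← this, Polynomial.eval₂_at_intCast]
    simp
  have hg0 : g 0 = (((FH n p).eval 0 : ℤ) : ℝ) := by
    have h0 := hev 0
    simp only [Nat.cast_zero, Nat.cast_ofNat] at h0
    simp only [hg, neg_zero, Real.exp_zero, one_mul]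
    exact h0
  have hgk : g k = Real.exp (-(k:ℝ)) * (((FH n p).eval (k:ℤ) : ℤ) : ℝ) := by
    simp [hg, hev k]
  rw [hg0, hgk] at hmvt
  have hexpk : Real.exp k > 0 := Real.exp_pos _
  have := mul_le_mul_of_nonneg_left hmvt hexpk.le
  rw [← abs_of_nonneg hexpk.le, ← abs_mul] at this
  have heq : Real.exp (k:ℝ) * (Real.exp (-(k:ℝ)) * (((FH n p).eval (k:ℤ) : ℤ) : ℝ) - (((FH n p).eval 0 : ℤ) : ℝ))
      = (((FH n p).eval (k:ℤ) : ℤ) : ℝ) - Real.exp k * (((FH n p).eval 0 : ℤ) : ℝ) := by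
    rw [mul_sub, ← mul_assoc, ← Real.exp_add]
    simp
  rw [heq] at this
  apply le_trans this
  rw [abs_of_nonneg hexpk.le]
  calc Real.exp (k:ℝ) * (B * (k:ℝ)) ≤ Real.exp n * (B * n) := by
        apply mul_le_mul (Real.exp_le_exp.2 (by exact_mod_cast hk)) ?_ ?_ (Real.exp_pos _).le
        · apply mul_le_mul_of_nonneg_left (by exact_mod_cast hk) hB0
        · positivity
    _ = Real.exp n * n * B := by ring

end Analytic

open Real

lemma hermite_main (n : ℕ) (a : ℕ → ℤ) (ha0 : a 0 ≠ 0)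
    (h : ∑ k ∈ Finset.range (n+1), (a k : ℝ) * Real.exp k = 0) : False := by
  classical
  set c : ℝ := (n:ℝ) + 1 with hc
  have hn0 : (0:ℝ) ≤ n := Nat.cast_nonneg n
  have hc1 : (1:ℝ) ≤ c := by rw [hc]; linarith
  set D : ℝ := c ^ (n+1) with hD
  have hD0 : (0:ℝ) < D := by positivity
  have hD1 : (1:ℝ) ≤ D := by
    calc (1:ℝ) = 1 ^ (n+1) := by norm_num
      _ ≤ c ^ (n+1) := pow_le_pow_left₀ zero_le_one hc1 _
  set A : ℝ := (∑ k ∈ Finset.range (n+1), (|a k| : ℝ)) * Real.exp n * n + 1 with hA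
  have hA1 : (1:ℝ) ≤ A := by
    have h1 : (0:ℝ) ≤ (∑ k ∈ Finset.range (n+1), (|a k| : ℝ)) := by positivity
    have h2 : (0:ℝ) ≤ Real.exp n := (Real.exp_pos _).le
    have := mul_nonneg (mul_nonneg h1 h2) hn0
    linarith
  -- choose p large enough
  have hε : (0:ℝ) < 1 / (A * D) := by positivity
  have hev : ∀ᶠ q in Filter.atTop, D ^ q / (q ! : ℝ) < 1 / (A * D) :=
    (FloorSemiring.tendsto_pow_div_factorial_atTop D).eventually (gt_mem_nhds hε)
  obtain ⟨q₀, hq₀⟩ := Filter.eventually_atTop.1 hev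
  obtain ⟨p, hple, hprime⟩ := Nat.exists_infinite_primes (max (q₀ + 1) (max (n + 2) ((a 0).natAbs + 1)))
  have hpn : n < p := by
    have := le_trans (le_max_left _ _) (le_trans (le_max_right _ _) hple)
    omega
  have hpa : (a 0).natAbs < p := by
    have := le_trans (le_max_right _ _) (le_trans (le_max_right _ _) hple)
    omega
  have hpq : q₀ ≤ p - 1 := by
    have := le_trans (le_max_left _ _) hple
    omega
  have hp : 0 < p := hprime.pos
  -- the big integer S
  set S : ℤ := ∑ k ∈ Finset.range (n+1), a k * (FH n p).eval (k:ℤ) with hS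
  set w0 : ℤ := ∏ i ∈ Finset.range n, (-((i:ℤ)+1)) ^ p with hw0
  have hppz : Prime ((p:ℤ)) := Nat.prime_iff_prime_int.1 hprime
  have hw0nd : ¬ ((p:ℤ) ∣ w0) := by
    intro hdvd
    obtain ⟨i, hi, hdvd2⟩ := hppz.exists_mem_finset_dvd hdvd
    have hd3 : ((p:ℤ)) ∣ ((i:ℤ)+1) := (dvd_neg).1 (hppz.dvd_of_dvd_pow hdvd2)
    have hle := Int.le_of_dvd (by positivity) hd3
    have h4 : ((i:ℤ)+1) ≤ (n:ℤ) := by exact_mod_cast Finset.mem_range.1 hi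
    have h5 : (n:ℤ) < (p:ℤ) := by exact_mod_cast hpn
    linarith
  have ha0nd : ¬ ((p:ℤ) ∣ a 0) := by
    intro hdvd
    have h6 := Int.le_of_dvd (abs_pos.2 ha0) ((dvd_abs _ _).2 hdvd)
    rw [Int.abs_eq_natAbs] at h6
    have h7 : ((a 0).natAbs : ℤ) < (p:ℤ) := by exact_mod_cast hpa
    linarith
  have hfac : ((p ! : ℕ) : ℤ) = (p:ℤ) * (((p-1)! : ℕ) : ℤ) := by
    rw [← Nat.mul_factorial_pred hp.ne']
    push_cast
    ring
  have hlow : ((((p:ℕ)-1)! : ℕ) : ℤ) ≤ |S| := by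
    obtain ⟨M, hM⟩ := FH_eval_zero n p hp
    have hsplit : S = a 0 * (FH n p).eval ((0:ℕ):ℤ)
        + ∑ k ∈ (Finset.range (n+1)).erase 0, a k * (FH n p).eval (k:ℤ) := by
      rw [hS, ← Finset.add_sum_erase _ (fun k => a k * (FH n p).eval (k:ℤ)) (show (0:ℕ) ∈ Finset.range (n+1) from Finset.mem_range.2 (by omega))]
    have hdvdS : ((p ! : ℕ) : ℤ) ∣ S - (((p-1)! : ℕ) : ℤ) * (a 0 * w0) := by
      rw [hsplit]
      have heq : a 0 * (FH n p).eval ((0:ℕ):ℤ)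
          + ∑ k ∈ (Finset.range (n+1)).erase 0, a k * (FH n p).eval (k:ℤ)
          - (((p-1)! : ℕ) : ℤ) * (a 0 * w0)
          = a 0 * ((FH n p).eval ((0:ℕ):ℤ) - (((p-1)! : ℕ) : ℤ) * w0)
            + ∑ k ∈ (Finset.range (n+1)).erase 0, a k * (FH n p).eval (k:ℤ) := by ring
      rw [heq]
      apply dvd_add
      · refine Dvd.dvd.mul_left ?_ (a 0)
        rw [show ((0:ℕ):ℤ) = (0:ℤ) by norm_num, hM, hw0]
        exact ⟨M, by ring⟩
      · apply Finset.dvd_sum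
        intro k hk
        have hk0 : k ≠ 0 := (Finset.mem_erase.1 hk).1
        have hkn : k ≤ n := by
          have := Finset.mem_range.1 (Finset.mem_erase.1 hk).2; omega
        exact (FH_eval_pos_dvd n p hp (Nat.one_le_iff_ne_zero.2 hk0) hkn).mul_left _
    obtain ⟨m, hm⟩ := hdvdS
    have hSform : S = (((p-1)! : ℕ) : ℤ) * (a 0 * w0 + (p:ℤ) * m) := by
      have h8 : S = (((p-1)! : ℕ) : ℤ) * (a 0 * w0) + ((p ! : ℕ) : ℤ) * m := by linarith [hm]
      rw [h8, hfac]
      ring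
    have hnz : a 0 * w0 + (p:ℤ) * m ≠ 0 := by
      intro hzero
      have hdvd : (p:ℤ) ∣ a 0 * w0 := by
        have h9 : a 0 * w0 = -((p:ℤ) * m) := by linarith
        rw [h9]
        exact (dvd_neg).2 ⟨m, rfl⟩
      rcases hppz.dvd_mul.1 hdvd with h' | h'
      · exact ha0nd h'
      · exact hw0nd h'
    have habs : (1:ℤ) ≤ |a 0 * w0 + (p:ℤ) * m| := Int.one_le_abs (by exact_mod_cast hnz)
    calc ((((p:ℕ)-1)! : ℕ) : ℤ) = ((((p:ℕ)-1)! : ℕ) : ℤ) * 1 := by ring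
      _ ≤ ((((p:ℕ)-1)! : ℕ) : ℤ) * |a 0 * w0 + (p:ℤ) * m| :=
          mul_le_mul_of_nonneg_left habs (by positivity)
      _ = |S| := by rw [hSform, abs_mul, abs_of_nonneg (by positivity : (0:ℤ) ≤ ((((p:ℕ)-1)! : ℕ) : ℤ))]
  -- real upper bound
  have hup : |(S:ℝ)| ≤ (A - 1) * D ^ p := by
    have hSr : (S:ℝ) = ∑ k ∈ Finset.range (n+1),
        (a k : ℝ) * ((((FH n p).eval (k:ℤ) : ℤ) : ℝ) - Real.exp k * (((FH n p).eval 0 : ℤ) : ℝ)) := by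
      have hexpand : ∑ k ∈ Finset.range (n+1),
          (a k : ℝ) * ((((FH n p).eval (k:ℤ) : ℤ) : ℝ) - Real.exp k * (((FH n p).eval 0 : ℤ) : ℝ))
          = (∑ k ∈ Finset.range (n+1), (a k : ℝ) * (((FH n p).eval (k:ℤ) : ℤ) : ℝ))
            - (∑ k ∈ Finset.range (n+1), (a k : ℝ) * Real.exp k) * (((FH n p).eval 0 : ℤ) : ℝ) := by
        rw [Finset.sum_mul, ← Finset.sum_sub_distrib]
        apply Finset.sum_congr rfl
        intro k _
        ring
      rw [hexpand, h, zero_mul, sub_zero, hS]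
      push_cast
      rfl
    rw [hSr]
    have hDp : ((n:ℝ)+1) ^ ((n+1)*p) = D ^ p := by rw [hD, hc, ← pow_mul]
    calc |∑ k ∈ Finset.range (n+1),
        (a k : ℝ) * ((((FH n p).eval (k:ℤ) : ℤ) : ℝ) - Real.exp k * (((FH n p).eval 0 : ℤ) : ℝ))|
        ≤ ∑ k ∈ Finset.range (n+1),
          |(a k : ℝ) * ((((FH n p).eval (k:ℤ) : ℤ) : ℝ) - Real.exp k * (((FH n p).eval 0 : ℤ) : ℝ))| :=
          Finset.abs_sum_le_sum_abs _ _
      _ ≤ ∑ k ∈ Finset.range (n+1), (|a k| : ℝ) * (Real.exp n * n * D ^ p) := by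
          apply Finset.sum_le_sum
          intro k hk
          rw [abs_mul]
          have hb := key_bound n p hp k (by have := Finset.mem_range.1 hk; omega)
          rw [hDp] at hb
          have : |(a k : ℝ)| = (|a k| : ℝ) := by push_cast; rfl
          rw [this]
          exact mul_le_mul_of_nonneg_left hb (by positivity)
      _ = (∑ k ∈ Finset.range (n+1), (|a k| : ℝ)) * (Real.exp n * n * D ^ p) := by
          rw [← Finset.sum_mul]
      _ = (A - 1) * D ^ p := by rw [hA]; ring
  -- contradiction
  have hfinal : ((((p:ℕ)-1)! : ℕ) : ℝ) ≤ (A - 1) * D ^ p := by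
    calc ((((p:ℕ)-1)! : ℕ) : ℝ) ≤ |(S:ℝ)| := by
          rw [← Int.cast_abs]
          exact_mod_cast hlow
      _ ≤ (A - 1) * D ^ p := hup
  have hsmall := hq₀ (p-1) hpq
  have hpexp : D ^ p = D ^ (p-1) * D := by
    rw [← pow_succ]
    congr 1
    omega
  have hfactpos : (0:ℝ) < (((p-1)! : ℕ) : ℝ) := by positivity
  rw [div_lt_iff₀ hfactpos] at hsmall
  have hAD : (0:ℝ) < A * D := by positivity
  rw [div_mul_eq_mul_div, lt_div_iff₀ hAD] at hsmall
  -- hsmall : D ^ (p-1) * (A * D) < 1 * (((p-1)! : ℕ) : ℝ) ... roughly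
  have hcontr : (A - 1) * D ^ p < ((((p:ℕ)-1)! : ℕ) : ℝ) := by
    have h10 : (A - 1) * D ^ p ≤ A * D ^ p := by nlinarith [pow_pos hD0 p]
    have h11 : A * D ^ p = D ^ (p-1) * (A * D) := by rw [hpexp]; ring
    nlinarith [hsmall]
  linarith

lemma multiset_sum_eq (m : Multiset ℕ) (f : ℕ → ℝ) (N : ℕ) (hm : m.toFinset ⊆ Finset.range N) :
    (m.map f).sum = ∑ k ∈ Finset.range N, (m.count k : ℝ) * f k := by
  rw [Finset.sum_multiset_map_count]
  rw [Finset.sum_subset hm]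
  · apply Finset.sum_congr rfl
    intro k _
    rw [nsmul_eq_mul]
  · intro x _ hx
    have : m.count x = 0 := by
      rw [Multiset.count_eq_zero]
      exact fun hmem => hx (Multiset.mem_toFinset.2 hmem)
    simp [this]

/-- The map sending a finite multiset `{n₁,…,n_k}` of naturals to `Σᵢ exp nᵢ` is
injective (moment-injectivity of `x ↦ exp x` on `ℕ`). -/
theorem multiset_exp_sum_injective :
    Function.Injective (fun m : Multiset ℕ => (m.map (fun n : ℕ => Real.exp n)).sum) := by
  intro m m' hsum
  by_contra hne
  simp only at hsum
  set N : ℕ := (m + m').toFinset.sup id + 1 with hN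
  have hsub : ∀ x : Multiset ℕ, x ≤ m + m' → x.toFinset ⊆ Finset.range N := by
    intro x hx
    intro k hk
    rw [Finset.mem_range, hN]
    have : k ∈ (m + m').toFinset := by
      rw [Multiset.mem_toFinset] at hk ⊢
      exact Multiset.mem_of_le hx hk
    have := Finset.le_sup (f := id) this
    simp only [id_eq] at this
    omega
  have hm : m.toFinset ⊆ Finset.range N := hsub m (Multiset.le_add_right _ _)
  have hm' : m'.toFinset ⊆ Finset.range N := hsub m' (Multiset.le_add_left _ _)
  set d : ℕ → ℤ := fun k => (m.count k : ℤ) - (m'.count k : ℤ) with hd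
  have hzero : ∑ k ∈ Finset.range N, (d k : ℝ) * Real.exp k = 0 := by
    have h1 := multiset_sum_eq m (fun n : ℕ => Real.exp n) N hm
    have h2 := multiset_sum_eq m' (fun n : ℕ => Real.exp n) N hm'
    rw [h1, h2] at hsum
    rw [← sub_eq_zero] at hsum
    rw [← hsum, ← Finset.sum_sub_distrib]
    apply Finset.sum_congr rfl
    intro k _
    rw [hd]
    push_cast
    ring
  have hex : ∃ k, d k ≠ 0 := by
    by_contra hall
    push_neg at hall
    apply hne
    ext k
    have := hall k
    rw [hd] at this
    simp only [sub_eq_zero] at this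
    exact_mod_cast this
  set k₀ := Nat.find hex with hk₀
  have hdk₀ : d k₀ ≠ 0 := Nat.find_spec hex
  have hmin : ∀ k < k₀, d k = 0 := by
    intro k hk
    by_contra hne'
    have h9 : Nat.find hex ≤ k := Nat.find_le hne'
    omega
  have hk₀N : k₀ < N := by
    by_contra hge
    push_neg at hge
    apply hdk₀
    rw [hd]
    have h1 : m.count k₀ = 0 := by
      rw [Multiset.count_eq_zero]
      intro hmem
      have := hm (Multiset.mem_toFinset.2 hmem)
      rw [Finset.mem_range] at this
      omega
    have h2 : m'.count k₀ = 0 := by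
      rw [Multiset.count_eq_zero]
      intro hmem
      have := hm' (Multiset.mem_toFinset.2 hmem)
      rw [Finset.mem_range] at this
      omega
    simp [h1, h2]
  -- shift the sum
  have hNsplit : N = k₀ + (N - k₀) := by omega
  have hsplit : ∑ k ∈ Finset.range N, (d k : ℝ) * Real.exp k
      = ∑ j ∈ Finset.range (N - k₀), (d (k₀ + j) : ℝ) * Real.exp (k₀ + j) := by
    conv_lhs => rw [hNsplit]
    rw [Finset.sum_range_add]
    have h0 : ∑ k ∈ Finset.range k₀, (d k : ℝ) * Real.exp k = 0 := by
      apply Finset.sum_eq_zero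
      intro k hk
      rw [hmin k (Finset.mem_range.1 hk)]
      simp
    rw [h0, zero_add]
    apply Finset.sum_congr rfl
    intro j _
    push_cast
    ring
  have hfactor : ∑ j ∈ Finset.range (N - k₀), (d (k₀ + j) : ℝ) * Real.exp (k₀ + j)
      = Real.exp k₀ * ∑ j ∈ Finset.range (N - k₀), (d (k₀ + j) : ℝ) * Real.exp j := by
    rw [Finset.mul_sum]
    apply Finset.sum_congr rfl
    intro j _
    push_cast
    rw [Real.exp_add]
    ring
  have hzero2 : ∑ j ∈ Finset.range (N - k₀), (d (k₀ + j) : ℝ) * Real.exp j = 0 := by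
    have := hzero
    rw [hsplit, hfactor] at this
    have hexp : Real.exp (k₀:ℝ) ≠ 0 := (Real.exp_pos _).ne'
    exact (mul_eq_zero.1 this).resolve_left hexp
  have hn : N - k₀ = (N - k₀ - 1) + 1 := by omega
  rw [hn] at hzero2
  exact hermite_main (N - k₀ - 1) (fun j => d (k₀ + j)) (by simpa using hdk₀) hzero2
end

section
/- There exist continuous functions f, g : ℝ → ℝ such that the function mapping a finite multiset {n₁,...,n_k} of natural numbers to g(Σᵢ f(nᵢ)) is a bijection from the set of finite multisets of natural numbers onto ℕ. -/
open Nat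

noncomputable def bfun : ℤ → ℝ := fun k => Real.log (Nat.nth Nat.Prime k.toNat)

noncomputable def ffun : ℝ → ℝ := fun x =>
  bfun ⌊x⌋ + Int.fract x * (bfun (⌊x⌋ + 1) - bfun ⌊x⌋)

lemma ffun_continuous : Continuous ffun := by
  have hlf : LocallyFinite (fun k : ℤ => Set.Icc (k : ℝ) (k + 1)) := by
    intro x
    refine ⟨Set.Ioo (x - 1) (x + 1), Ioo_mem_nhds (by linarith) (by linarith), ?_⟩
    have hsub : {k : ℤ | (Set.Icc (k : ℝ) (k + 1) ∩ Set.Ioo (x - 1) (x + 1)).Nonempty} ⊆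
        Set.Icc (⌊x⌋ - 2) (⌊x⌋ + 2) := by
      rintro k ⟨y, ⟨hy1, hy2⟩, hy3, hy4⟩
      have hfl1 : ((⌊x⌋ : ℝ)) ≤ x := Int.floor_le x
      have hfl2 : x < ((⌊x⌋ : ℝ)) + 1 := Int.lt_floor_add_one x
      constructor
      · have h2 : ((⌊x⌋ : ℝ)) - 2 ≤ (k : ℝ) := by linarith
        exact_mod_cast h2
      · have h2 : (k : ℝ) ≤ ((⌊x⌋ : ℝ)) + 2 := by linarith
        exact_mod_cast h2
    exact (Set.finite_Icc _ _).subset hsub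
  have hcov : (⋃ k : ℤ, Set.Icc (k : ℝ) (k + 1)) = Set.univ := by
    ext x
    simp only [Set.mem_iUnion, Set.mem_univ, iff_true]
    exact ⟨⌊x⌋, Int.floor_le x, (Int.lt_floor_add_one x).le⟩
  refine hlf.continuous hcov (fun k => isClosed_Icc) (fun k => ?_)
  have haff : ContinuousOn
      (fun x : ℝ => bfun k + (x - k) * (bfun (k + 1) - bfun k)) (Set.Icc (k : ℝ) (k + 1)) :=
    (continuous_const.add ((continuous_id.sub continuous_const).mul continuous_const)).continuousOn
  refine haff.congr (fun x hx => ?_)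
  rcases eq_or_lt_of_le hx.2 with heq | hlt
  · have hfl : ⌊x⌋ = k + 1 := by
      rw [heq]; exact_mod_cast Int.floor_intCast (R := ℝ) (k + 1)
    have hfr : Int.fract x = 0 := by
      rw [heq]; exact_mod_cast Int.fract_intCast (R := ℝ) (k + 1)
    have hval : ffun x = bfun (k + 1) := by
      rw [ffun, hfl, hfr]; ring
    rw [hval, heq]
    push_cast
    try ring
  · have hfl : ⌊x⌋ = k := Int.floor_eq_iff.mpr ⟨hx.1, by exact_mod_cast hlt⟩
    simp only [ffun, hfl, Int.fract, hfl]
    try ring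

noncomputable def gfun : ℝ → ℝ := fun x => Real.exp x - 1

lemma nth_prime_pos (n : ℕ) : 0 < Nat.nth Nat.Prime n := (Nat.prime_nth_prime n).pos

lemma prod_map_nth_pos (m : Multiset ℕ) :
    0 < (m.map (fun n => Nat.nth Nat.Prime n)).prod := by
  apply Multiset.prod_pos
  intro a ha
  obtain ⟨n, _, rfl⟩ := Multiset.mem_map.mp ha
  exact nth_prime_pos n

lemma ffun_nat (n : ℕ) : ffun (n : ℝ) = Real.log (Nat.nth Nat.Prime n) := by
  simp [ffun, bfun, Int.floor_natCast, Int.fract_natCast]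

lemma sum_log (m : Multiset ℕ) :
    ((m.map (fun n : ℕ => ffun n)).sum)
      = Real.log (((m.map (fun n => Nat.nth Nat.Prime n)).prod : ℕ) : ℝ) := by
  induction m using Multiset.induction with
  | empty => simp
  | cons a s ih =>
    simp only [Multiset.map_cons, Multiset.sum_cons, Multiset.prod_cons]
    rw [ih, ffun_nat]
    rw [Nat.cast_mul, Real.log_mul (by exact_mod_cast (nth_prime_pos a).ne')
      (by exact_mod_cast (prod_map_nth_pos s).ne')]

lemma key_eval (m : Multiset ℕ) :
    gfun ((m.map (fun n : ℕ => ffun n)).sum)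
      = (((m.map (fun n => Nat.nth Nat.Prime n)).prod : ℕ) : ℝ) - 1 := by
  rw [sum_log, gfun, Real.exp_log]
  exact_mod_cast prod_map_nth_pos m

lemma prime_multiset_eq_of_prod_eq {s t : Multiset ℕ} (hs : ∀ q ∈ s, q.Prime)
    (ht : ∀ q ∈ t, q.Prime) (h : s.prod = t.prod) : s = t := by
  have key : ∀ u : Multiset ℕ, (∀ q ∈ u, q.Prime) →
      u = ((u.prod).primeFactorsList : Multiset ℕ) := by
    intro u hu
    have h1 : u.toList.prod = u.prod := Multiset.prod_toList u
    have h2 : ∀ p ∈ u.toList, p.Prime := fun p hp => hu p (by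
      rw [← Multiset.mem_toList]; exact hp)
    have := Nat.primeFactorsList_unique h1 h2
    calc u = (u.toList : Multiset ℕ) := (Multiset.coe_toList u).symm
      _ = ((u.prod).primeFactorsList : Multiset ℕ) := Multiset.coe_eq_coe.mpr this
  rw [key s hs, key t ht, h]

/-- There exist continuous `f g : ℝ → ℝ` such that `m ↦ g (Σ_{n ∈ m} f n)` is a
bijection from the finite multisets of natural numbers onto `ℕ ⊆ ℝ`. -/
theorem exists_continuous_multiset_bijection_onto_nat :
    ∃ f g : ℝ → ℝ, Continuous f ∧ Continuous g ∧
      Function.Injective (fun m : Multiset ℕ => g ((m.map (fun n : ℕ => f n)).sum)) ∧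
      Set.range (fun m : Multiset ℕ => g ((m.map (fun n : ℕ => f n)).sum)) =
        Set.range (fun n : ℕ => (n : ℝ)) := by
  refine ⟨ffun, gfun, ffun_continuous,
    (Real.continuous_exp.sub continuous_const), ?_, ?_⟩
  · intro m₁ m₂ h
    simp only [key_eval] at h
    have hprod : (m₁.map (fun n => Nat.nth Nat.Prime n)).prod
        = (m₂.map (fun n => Nat.nth Nat.Prime n)).prod := by
      have : (((m₁.map (fun n => Nat.nth Nat.Prime n)).prod : ℕ) : ℝ)
          = (((m₂.map (fun n => Nat.nth Nat.Prime n)).prod : ℕ) : ℝ) := by linarith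
      exact_mod_cast this
    have hmaps : m₁.map (fun n => Nat.nth Nat.Prime n)
        = m₂.map (fun n => Nat.nth Nat.Prime n) := by
      apply prime_multiset_eq_of_prod_eq _ _ hprod <;>
      · intro q hq
        obtain ⟨n, _, rfl⟩ := Multiset.mem_map.mp hq
        exact Nat.prime_nth_prime n
    exact Multiset.map_injective (Nat.nth_injective Nat.infinite_setOf_prime) hmaps
  · ext x
    simp only [Set.mem_range, key_eval]
    constructor
    · rintro ⟨m, rfl⟩
      have h1 : 1 ≤ (m.map (fun n => Nat.nth Nat.Prime n)).prod := prod_map_nth_pos m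
      exact ⟨(m.map (fun n => Nat.nth Nat.Prime n)).prod - 1, by
        push_cast [Nat.cast_sub h1]; ring⟩
    · rintro ⟨n, rfl⟩
      refine ⟨((((n + 1 : ℕ)).primeFactorsList : Multiset ℕ)).map
        (fun q => Nat.count Nat.Prime q), ?_⟩
      have hmap : ((((n + 1 : ℕ)).primeFactorsList : Multiset ℕ)).map
          ((fun k => Nat.nth Nat.Prime k) ∘ (fun q => Nat.count Nat.Prime q))
          = (((n + 1 : ℕ)).primeFactorsList : Multiset ℕ) := by
        rw [Multiset.map_congr rfl, Multiset.map_id]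
        intro q hq
        exact Nat.nth_count (Nat.prime_of_mem_primeFactorsList
          (by exact_mod_cast hq))
      rw [← Multiset.map_map] at hmap
      rw [hmap]
      have : ((n + 1 : ℕ)).primeFactorsList.prod = n + 1 :=
        Nat.prod_primeFactorsList (Nat.succ_ne_zero n)
      rw [show ((((n + 1 : ℕ)).primeFactorsList : Multiset ℕ)).prod
          = ((n + 1 : ℕ)).primeFactorsList.prod from Multiset.prod_coe _, this]
      push_cast; ring
end

section
/- Every unary semilinear function f : ℝ → ℝ is expressible as a composition of affine functions with rational coefficients, the ReLU function, and the Heaviside step function H (where H(x) = 1 if x ≥ 0 and 0 otherwise). -/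
open FirstOrder

/-- Function symbols of the language `(+, 0, 1)`. -/
inductive OrdAddFunc : ℕ → Type
  | zero : OrdAddFunc 0
  | one : OrdAddFunc 0
  | add : OrdAddFunc 2

/-- Relation symbols of the language `(<)`. -/
inductive OrdAddRel : ℕ → Type
  | lt : OrdAddRel 2

/-- The first-order language of the structure `(ℝ, +, <, 0, 1)`. -/
def ordAddLang : Language := ⟨OrdAddFunc, OrdAddRel⟩

instance : ordAddLang.Structure ℝ where
  funMap {n} f x :=
    match f with
    | OrdAddFunc.zero => 0
    | OrdAddFunc.one => 1
    | OrdAddFunc.add => x 0 + x 1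
  RelMap {n} r x :=
    match r with
    | OrdAddRel.lt => x 0 < x 1

/-- A function `ℝⁿ → ℝ` is semilinear if its graph is definable without parameters
in the structure `(ℝ, +, <, 0, 1)`. -/
def Semilinear {n : ℕ} (f : (Fin n → ℝ) → ℝ) : Prop :=
  Set.Definable (∅ : Set ℝ) ordAddLang
    {v : Fin (n + 1) → ℝ | f (fun i => v i.castSucc) = v (Fin.last n)}

/-- The class of unary functions obtained by composing affine functions with rational
coefficients, `ReLU`, and the Heaviside step function `H`. -/
inductive ReLUHClosure : (ℝ → ℝ) → Prop
  | id : ReLUHClosure (fun x => x)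
  | const (q : ℚ) : ReLUHClosure (fun _ => (q : ℝ))
  | add {f g : ℝ → ℝ} : ReLUHClosure f → ReLUHClosure g →
      ReLUHClosure (fun x => f x + g x)
  | smul (q : ℚ) {f : ℝ → ℝ} : ReLUHClosure f → ReLUHClosure (fun x => (q : ℝ) * f x)
  | relu {f : ℝ → ℝ} : ReLUHClosure f → ReLUHClosure (fun x => max (f x) 0)
  | heaviside {f : ℝ → ℝ} : ReLUHClosure f →
      ReLUHClosure (fun x => if 0 ≤ f x then (1 : ℝ) else 0)

namespace SLAux

/-- A linear atom over `n` variables: coefficients, constant, and a flag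
(`true` = strict inequality `< 0`, `false` = equality `= 0`). -/
abbrev Atom (n : ℕ) := (Fin n → ℚ) × ℚ × Bool

noncomputable def aval {n : ℕ} (a : Atom n) (v : Fin n → ℝ) : ℝ :=
  (∑ i, (a.1 i : ℝ) * v i) + (a.2.1 : ℝ)

def AHolds {n : ℕ} (a : Atom n) (v : Fin n → ℝ) : Prop :=
  if a.2.2 then aval a v < 0 else aval a v = 0

def BHolds {n : ℕ} (b : List (Atom n)) (v : Fin n → ℝ) : Prop :=
  ∀ a ∈ b, AHolds a v

def LHolds {n : ℕ} (l : List (List (Atom n))) (v : Fin n → ℝ) : Prop :=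
  ∃ b ∈ l, BHolds b v

lemma LHolds_append {n} (l₁ l₂ : List (List (Atom n))) (v) :
    LHolds (l₁ ++ l₂) v ↔ LHolds l₁ v ∨ LHolds l₂ v := by
  simp [LHolds, List.mem_append, or_and_right, exists_or]

def interL {n} (l₁ l₂ : List (List (Atom n))) : List (List (Atom n)) :=
  l₁.flatMap (fun b₁ => l₂.map (fun b₂ => b₁ ++ b₂))

lemma BHolds_append {n} (b₁ b₂ : List (Atom n)) (v) :
    BHolds (b₁ ++ b₂) v ↔ BHolds b₁ v ∧ BHolds b₂ v := by
  simp [BHolds, List.mem_append, or_imp, forall_and]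

lemma LHolds_interL {n} (l₁ l₂ : List (List (Atom n))) (v) :
    LHolds (interL l₁ l₂) v ↔ LHolds l₁ v ∧ LHolds l₂ v := by
  constructor
  · rintro ⟨b, hb, hv⟩
    simp only [interL, List.mem_flatMap, List.mem_map] at hb
    obtain ⟨b₁, hb₁, b₂, hb₂, rfl⟩ := hb
    rw [BHolds_append] at hv
    exact ⟨⟨b₁, hb₁, hv.1⟩, ⟨b₂, hb₂, hv.2⟩⟩
  · rintro ⟨⟨b₁, hb₁, hv₁⟩, ⟨b₂, hb₂, hv₂⟩⟩
    exact ⟨b₁ ++ b₂, by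
      simp only [interL, List.mem_flatMap, List.mem_map]
      exact ⟨b₁, hb₁, b₂, hb₂, rfl⟩,
      (BHolds_append _ _ _).2 ⟨hv₁, hv₂⟩⟩

def negA {n} (a : Atom n) : List (List (Atom n)) :=
  if a.2.2 then [ [((fun i => -a.1 i, -a.2.1, true) : Atom n)], [((a.1, a.2.1, false) : Atom n)] ]
  else [ [((a.1, a.2.1, true) : Atom n)], [((fun i => -a.1 i, -a.2.1, true) : Atom n)] ]

lemma aval_neg {n} (c : Fin n → ℚ) (q : ℚ) (fl fl' : Bool) (v : Fin n → ℝ) :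
    aval ((fun i => -c i, -q, fl) : Atom n) v = -aval ((c, q, fl') : Atom n) v := by
  simp [aval, neg_mul, Finset.sum_neg_distrib]
  ring

lemma LHolds_pair {n} (a₁ a₂ : Atom n) (v) :
    LHolds [ [a₁], [a₂] ] v ↔ AHolds a₁ v ∨ AHolds a₂ v := by
  constructor
  · rintro ⟨b, hb, hv⟩
    simp only [List.mem_cons, List.not_mem_nil, or_false] at hb
    rcases hb with rfl | rfl
    · exact Or.inl (hv _ (by simp))
    · exact Or.inr (hv _ (by simp))
  · rintro (h | h)
    · exact ⟨[a₁], by simp, fun a ha => by rw [List.mem_singleton] at ha; subst ha; exact h⟩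
    · exact ⟨[a₂], by simp, fun a ha => by rw [List.mem_singleton] at ha; subst ha; exact h⟩

lemma LHolds_negA {n} (a : Atom n) (v) : LHolds (negA a) v ↔ ¬ AHolds a v := by
  obtain ⟨c, q, fl⟩ := a
  have hval : ∀ fl', aval ((c, q, fl') : Atom n) v = aval ((c, q, true) : Atom n) v :=
    fun _ => rfl
  set t := aval ((c, q, true) : Atom n) v with ht
  cases fl
  · rw [show negA ((c, q, false) : Atom n) =
      [ [((c, q, true) : Atom n)], [((fun i => -c i, -q, true) : Atom n)] ] from rfl,
      LHolds_pair]
    simp only [AHolds, if_true, if_false, Bool.false_eq_true, aval_neg c q true false,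
      hval, ← ht]
    constructor
    · rintro (h | h) h0 <;> rw [h0] at h <;> simp at h
    · intro h
      rcases lt_or_gt_of_ne h with h1 | h1
      · exact Or.inl h1
      · exact Or.inr (by linarith)
  · rw [show negA ((c, q, true) : Atom n) =
      [ [((fun i => -c i, -q, true) : Atom n)], [((c, q, false) : Atom n)] ] from rfl,
      LHolds_pair]
    simp only [AHolds, if_true, if_false, Bool.false_eq_true, aval_neg c q true true,
      hval, ← ht]
    constructor
    · rintro (h | h) h0 <;> [linarith; (rw [h] at h0; simp at h0)]
    · intro h
      rcases (not_lt.1 h).lt_or_eq with h1 | h1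
      · exact Or.inl (by linarith)
      · exact Or.inr h1.symm

def complB {n} (b : List (Atom n)) : List (List (Atom n)) := b.flatMap negA

lemma LHolds_complB {n} (b : List (Atom n)) (v) : LHolds (complB b) v ↔ ¬ BHolds b v := by
  rw [BHolds, not_forall]
  constructor
  · rintro ⟨b', hb', hv⟩
    simp only [complB, List.mem_flatMap] at hb'
    obtain ⟨a, ha, hb'⟩ := hb'
    exact ⟨a, by rw [not_forall]; exact ⟨ha, ((LHolds_negA a v).1 ⟨b', hb', hv⟩)⟩⟩
  · rintro ⟨a, ha⟩
    rw [not_forall] at ha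
    obtain ⟨ha, hna⟩ := ha
    obtain ⟨b', hb', hv⟩ := (LHolds_negA a v).2 hna
    exact ⟨b', by simp only [complB, List.mem_flatMap]; exact ⟨a, ha, hb'⟩, hv⟩

def complL {n} (l : List (List (Atom n))) : List (List (Atom n)) :=
  l.foldr (fun b acc => interL (complB b) acc) [ ([] : List (Atom n)) ]

lemma LHolds_complL {n} (l : List (List (Atom n))) (v) : LHolds (complL l) v ↔ ¬ LHolds l v := by
  induction l with
  | nil => simp [complL, LHolds, BHolds]
  | cons b l ih =>
      simp only [complL, List.foldr_cons] at *
      rw [LHolds_interL, LHolds_complB, ih]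
      constructor
      · rintro ⟨h1, h2⟩ ⟨b', hb', hv⟩
        rcases List.mem_cons.1 hb' with rfl | hb'
        · exact h1 hv
        · exact h2 ⟨b', hb', hv⟩
      · intro h
        refine ⟨fun hb => h ⟨b, List.mem_cons_self, hb⟩, fun hex => ?_⟩
        obtain ⟨b', hb', hv⟩ := hex
        exact h ⟨b', List.mem_cons_of_mem _ hb', hv⟩

-- list max/min helpers
lemma list_max (l : List ℝ) (h : l ≠ []) : ∃ A ∈ l, ∀ a ∈ l, a ≤ A := by
  induction l with
  | nil => exact absurd rfl h
  | cons x t ih =>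
      rcases eq_or_ne t [] with rfl | ht
      · exact ⟨x, by simp, by simp⟩
      · obtain ⟨A, hA, hAmax⟩ := ih ht
        refine ⟨max x A, ?_, ?_⟩
        · rcases max_choice x A with h1 | h1 <;> rw [h1]
          · exact List.mem_cons_self
          · exact List.mem_cons_of_mem _ hA
        · intro a ha
          rcases List.mem_cons.1 ha with rfl | ha
          · exact le_max_left _ _
          · exact le_trans (hAmax a ha) (le_max_right _ _)

lemma list_min (l : List ℝ) (h : l ≠ []) : ∃ B ∈ l, ∀ b ∈ l, B ≤ b := by
  obtain ⟨A, hA, hAmax⟩ := list_max (l.map Neg.neg) (by simpa using h)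
  obtain ⟨B, hB, rfl⟩ := List.mem_map.1 hA
  exact ⟨B, hB, fun b hb => by
    have := hAmax (-b) (List.mem_map_of_mem hb); linarith⟩

/-- Existence of a value strictly between two finite lists of reals. -/
lemma exists_between_lists (L U : List ℝ) (h : ∀ a ∈ L, ∀ b ∈ U, a < b) :
    ∃ y : ℝ, (∀ a ∈ L, a < y) ∧ (∀ b ∈ U, y < b) := by
  rcases eq_or_ne L [] with rfl | hL
  · rcases eq_or_ne U [] with rfl | hU
    · exact ⟨0, by simp, by simp⟩
    · obtain ⟨B, hB, hBmin⟩ := list_min U hU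
      exact ⟨B - 1, by simp, fun b hb => by have := hBmin b hb; linarith⟩
  · obtain ⟨A, hA, hAmax⟩ := list_max L hL
    rcases eq_or_ne U [] with rfl | hU
    · exact ⟨A + 1, fun a ha => by have := hAmax a ha; linarith, by simp⟩
    · obtain ⟨B, hB, hBmin⟩ := list_min U hU
      have hAB : A < B := h A hA B hB
      exact ⟨(A + B) / 2, fun a ha => by have := hAmax a ha; linarith,
        fun b hb => by have := hBmin b hb; linarith⟩

def lastC {n : ℕ} (a : Atom (n + 1)) : ℚ := a.1 (Fin.last n)

lemma aval_snoc {n : ℕ} (a : Atom (n + 1)) (v : Fin n → ℝ) (y : ℝ) :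
    aval a (Fin.snoc v y) =
      ((∑ i, (a.1 i.castSucc : ℝ) * v i) + (lastC a : ℝ) * y) + (a.2.1 : ℝ) := by
  simp [aval, Fin.sum_univ_castSucc, lastC]

def restrictA {n : ℕ} (a : Atom (n + 1)) : Atom n :=
  (fun i => a.1 i.castSucc, a.2.1, a.2.2)

lemma aval_restrictA {n : ℕ} (a : Atom (n + 1)) (h : lastC a = 0) (v : Fin n → ℝ) (y : ℝ) :
    aval (restrictA a) v = aval a (Fin.snoc v y) := by
  rw [aval_snoc, h]
  simp [restrictA, aval]

def substA {n : ℕ} (d : Fin n → ℚ) (r : ℚ) (a : Atom (n + 1)) : Atom n :=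
  (fun i => a.1 i.castSucc + lastC a * d i, lastC a * r + a.2.1, a.2.2)

lemma aval_substA {n : ℕ} (d : Fin n → ℚ) (r : ℚ) (a : Atom (n + 1)) (v : Fin n → ℝ) :
    aval (substA d r a) v = aval a (Fin.snoc v ((∑ i, (d i : ℝ) * v i) + (r : ℝ))) := by
  rw [aval_snoc]
  simp only [substA, aval]
  push_cast
  simp_rw [add_mul, mul_assoc]
  rw [Finset.sum_add_distrib, ← Finset.mul_sum]
  ring

def crossA {n : ℕ} (lo hi : Atom (n + 1)) : Atom n :=
  (fun i => lastC hi * lo.1 i.castSucc - lastC lo * hi.1 i.castSucc,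
   lastC hi * lo.2.1 - lastC lo * hi.2.1, true)

lemma aval_crossA {n : ℕ} (lo hi : Atom (n + 1)) (v : Fin n → ℝ) (y : ℝ) :
    aval (crossA lo hi) v =
      (lastC hi : ℝ) * aval lo (Fin.snoc v y) - (lastC lo : ℝ) * aval hi (Fin.snoc v y) := by
  rw [aval_snoc, aval_snoc]
  simp only [crossA, aval]
  push_cast
  simp_rw [sub_mul, mul_assoc]
  rw [Finset.sum_sub_distrib, ← Finset.mul_sum, ← Finset.mul_sum]
  ring

def findEq {n : ℕ} (b : List (Atom (n + 1))) : Option (Atom (n + 1)) :=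
  b.find? (fun a => a.2.2 = false ∧ lastC a ≠ 0)

def projB {n : ℕ} (b : List (Atom (n + 1))) : List (Atom n) :=
  match findEq b with
  | some e => b.map (substA (fun i => -e.1 i.castSucc / lastC e) (-e.2.1 / lastC e))
  | none =>
      (b.filter (fun a => lastC a = 0)).map restrictA ++
      (b.filter (fun a => lastC a < 0)).flatMap
        (fun lo => (b.filter (fun a => 0 < lastC a)).map (fun hi => crossA lo hi))

lemma AHolds_congr {n m : ℕ} (a₁ : Atom n) (a₂ : Atom m) (v₁ : Fin n → ℝ) (v₂ : Fin m → ℝ)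
    (h : aval a₁ v₁ = aval a₂ v₂) (hf : a₁.2.2 = a₂.2.2) :
    (AHolds a₁ v₁ ↔ AHolds a₂ v₂) := by
  simp [AHolds, h, hf]

lemma aval_snoc_decomp {n : ℕ} (a : Atom (n + 1)) (v : Fin n → ℝ) (y : ℝ) :
    aval a (Fin.snoc v y) = aval a (Fin.snoc v 0) + (lastC a : ℝ) * y := by
  rw [aval_snoc, aval_snoc]; ring

lemma BHolds_projB {n : ℕ} (b : List (Atom (n + 1))) (v : Fin n → ℝ) :
    BHolds (projB b) v ↔ ∃ y, BHolds b (Fin.snoc v y) := by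
  rcases hfe : findEq b with _ | e
  · -- no equality atom involving the last variable
    have hflag : ∀ a ∈ b, lastC a ≠ 0 → a.2.2 = true := by
      intro a ha hne
      have h0 := List.find?_eq_none.1 hfe a ha
      by_contra hf
      exact h0 (decide_eq_true ⟨by revert hf; cases a.2.2 <;> simp, hne⟩)
    have hproj : projB b =
        (b.filter (fun a => lastC a = 0)).map restrictA ++
        (b.filter (fun a => lastC a < 0)).flatMap
          (fun lo => (b.filter (fun a => 0 < lastC a)).map (fun hi => crossA lo hi)) := by
      rw [projB, hfe]
    set β : Atom (n + 1) → ℝ := fun a => -(aval a (Fin.snoc v 0)) / (lastC a : ℝ) with hβ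
    have hlow : ∀ a : Atom (n + 1), lastC a < 0 → ∀ y : ℝ,
        (aval a (Fin.snoc v y) < 0 ↔ β a < y) := by
      intro a hc y
      rw [aval_snoc_decomp, hβ]
      have hc' : (lastC a : ℝ) < 0 := by exact_mod_cast hc
      rw [div_lt_iff_of_neg hc']
      constructor <;> intro h <;> nlinarith
    have hhigh : ∀ a : Atom (n + 1), 0 < lastC a → ∀ y : ℝ,
        (aval a (Fin.snoc v y) < 0 ↔ y < β a) := by
      intro a hc y
      rw [aval_snoc_decomp, hβ]
      have hc' : (0:ℝ) < (lastC a : ℝ) := by exact_mod_cast hc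
      rw [lt_div_iff₀ hc']
      constructor <;> intro h <;> nlinarith
    constructor
    · intro h
      have hcross : ∀ lo ∈ b.filter (fun a => lastC a < 0),
          ∀ hi ∈ b.filter (fun a => 0 < lastC a), β lo < β hi := by
        intro lo hlo hi hhi
        have hmem : crossA lo hi ∈ projB b := by
          rw [hproj]
          refine List.mem_append_right _ ?_
          rw [List.mem_flatMap]
          exact ⟨lo, hlo, List.mem_map_of_mem hhi⟩
        have hA := h _ hmem
        rw [AHolds] at hA
        simp only [crossA, if_true] at hA
        rw [show ((fun i => lastC hi * lo.1 i.castSucc - lastC lo * hi.1 i.castSucc,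
          lastC hi * lo.2.1 - lastC lo * hi.2.1, true) : Atom n) = crossA lo hi from rfl,
          aval_crossA lo hi v 0] at hA
        have hclo : lastC lo < 0 := of_decide_eq_true (List.mem_filter.1 hlo).2
        have hchi : 0 < lastC hi := of_decide_eq_true (List.mem_filter.1 hhi).2
        have hclo' : (lastC lo : ℝ) < 0 := by exact_mod_cast hclo
        have hchi' : (0:ℝ) < (lastC hi : ℝ) := by exact_mod_cast hchi
        have e1 : (lastC lo : ℝ) * β lo = -(aval lo (Fin.snoc v 0)) := by
          simp only [hβ]; rw [mul_comm, div_mul_cancel₀ _ (ne_of_lt hclo')]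
        have e2 : (lastC hi : ℝ) * β hi = -(aval hi (Fin.snoc v 0)) := by
          simp only [hβ]; rw [mul_comm, div_mul_cancel₀ _ (ne_of_gt hchi')]
        nlinarith [hA, e1, e2, mul_pos (neg_pos.2 hclo') hchi']
      obtain ⟨y, hyl, hyu⟩ := exists_between_lists
        ((b.filter (fun a => lastC a < 0)).map β)
        ((b.filter (fun a => 0 < lastC a)).map β)
        (by
          intro x hx z hz
          obtain ⟨lo, hlo, rfl⟩ := List.mem_map.1 hx
          obtain ⟨hi, hhi, rfl⟩ := List.mem_map.1 hz
          exact hcross lo hlo hi hhi)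
      refine ⟨y, fun a ha => ?_⟩
      rcases lt_trichotomy (lastC a) 0 with hc | hc | hc
      · have hb : β a < y := hyl _ (List.mem_map_of_mem
          (List.mem_filter.2 ⟨ha, decide_eq_true hc⟩))
        simpa [AHolds, hflag a ha (ne_of_lt hc)] using (hlow a hc y).2 hb
      · have hmem : restrictA a ∈ projB b := by
          rw [hproj]
          exact List.mem_append_left _ (List.mem_map_of_mem
            (List.mem_filter.2 ⟨ha, decide_eq_true hc⟩))
        exact (AHolds_congr _ _ _ _ (aval_restrictA a hc v y) rfl).1 (h _ hmem)
      · have hb : y < β a := hyu _ (List.mem_map_of_mem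
          (List.mem_filter.2 ⟨ha, decide_eq_true hc⟩))
        simpa [AHolds, hflag a ha (ne_of_gt hc)] using (hhigh a hc y).2 hb
    · rintro ⟨y, hy⟩
      intro a' ha'
      rw [hproj] at ha'
      rcases List.mem_append.1 ha' with ha' | ha'
      · obtain ⟨a, ha, rfl⟩ := List.mem_map.1 ha'
        have hc : lastC a = 0 := of_decide_eq_true (List.mem_filter.1 ha).2
        exact (AHolds_congr _ _ _ _ (aval_restrictA a hc v y) rfl).2
          (hy a (List.mem_filter.1 ha).1)
      · rw [List.mem_flatMap] at ha'
        obtain ⟨lo, hlo, ha'⟩ := ha'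
        obtain ⟨hi, hhi, rfl⟩ := List.mem_map.1 ha'
        have hclo : lastC lo < 0 := of_decide_eq_true (List.mem_filter.1 hlo).2
        have hchi : 0 < lastC hi := of_decide_eq_true (List.mem_filter.1 hhi).2
        have hlo' := hy lo (List.mem_filter.1 hlo).1
        have hhi' := hy hi (List.mem_filter.1 hhi).1
        simp only [AHolds, hflag lo (List.mem_filter.1 hlo).1 (ne_of_lt hclo), if_true] at hlo'
        simp only [AHolds, hflag hi (List.mem_filter.1 hhi).1 (ne_of_gt hchi), if_true] at hhi'
        rw [AHolds]
        simp only [crossA, if_true]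
        rw [show ((fun i => lastC hi * lo.1 i.castSucc - lastC lo * hi.1 i.castSucc,
          lastC hi * lo.2.1 - lastC lo * hi.2.1, true) : Atom n) = crossA lo hi from rfl,
          aval_crossA lo hi v y]
        have hclo' : (lastC lo : ℝ) < 0 := by exact_mod_cast hclo
        have hchi' : (0:ℝ) < (lastC hi : ℝ) := by exact_mod_cast hchi
        nlinarith
  · -- there is an equality atom with nonzero last coefficient
    have hfe' : b.find? (fun a => decide (a.2.2 = false ∧ lastC a ≠ 0)) = some e := hfe
    have heb : e ∈ b := List.mem_of_find?_eq_some hfe'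
    have hep : e.2.2 = false ∧ lastC e ≠ 0 := by
      have h1 := List.find?_some hfe'
      simpa using h1
    have hc : (lastC e : ℝ) ≠ 0 := by exact_mod_cast hep.2
    set d : Fin n → ℚ := fun i => -e.1 i.castSucc / lastC e with hd
    set r : ℚ := -e.2.1 / lastC e with hr
    set T : ℝ := (∑ i, (d i : ℝ) * v i) + (r : ℝ) with hT
    have hproj : projB b = b.map (substA d r) := by rw [projB, hfe]
    have hdT : (lastC e : ℝ) * T = -((∑ i, (e.1 i.castSucc : ℝ) * v i) + (e.2.1 : ℝ)) := by
      simp only [hT, hd, hr]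
      push_cast
      rw [mul_add, Finset.mul_sum]
      have h1 : ∀ i : Fin n, (lastC e : ℝ) * (-(e.1 i.castSucc : ℝ) / (lastC e : ℝ) * v i)
          = -((e.1 i.castSucc : ℝ) * v i) := by intro i; field_simp
      have h2 : (lastC e : ℝ) * (-(e.2.1 : ℝ) / (lastC e : ℝ)) = -(e.2.1 : ℝ) := by field_simp
      simp_rw [h1]
      rw [h2, Finset.sum_neg_distrib]
      ring
    have hzero : aval e (Fin.snoc v T) = 0 := by
      rw [aval_snoc]
      linarith [hdT]
    have huniq : ∀ y, aval e (Fin.snoc v y) = 0 → y = T := by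
      intro y hy0
      rw [aval_snoc_decomp] at hy0 hzero
      have : (lastC e : ℝ) * y = (lastC e : ℝ) * T := by linarith
      exact mul_left_cancel₀ hc this
    constructor
    · intro h
      refine ⟨T, fun a ha => ?_⟩
      have := h _ (by rw [hproj]; exact List.mem_map_of_mem ha)
      exact (AHolds_congr _ _ _ _ (aval_substA d r a v) rfl).1 this
    · rintro ⟨y, hy⟩
      have hy0 : aval e (Fin.snoc v y) = 0 := by
        have := hy e heb
        rwa [AHolds, hep.1, if_neg (by simp)] at this
      have hyT : y = T := huniq y hy0
      intro a' ha'
      rw [hproj] at ha'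
      obtain ⟨a, ha, rfl⟩ := List.mem_map.1 ha'
      refine (AHolds_congr _ _ _ _ (aval_substA d r a v) rfl).2 ?_
      rw [← hT, ← hyT]
      exact hy a ha


def projL {n : ℕ} (l : List (List (Atom (n + 1)))) : List (List (Atom n)) := l.map projB

lemma LHolds_projL {n : ℕ} (l : List (List (Atom (n + 1)))) (v : Fin n → ℝ) :
    LHolds (projL l) v ↔ ∃ y, LHolds l (Fin.snoc v y) := by
  constructor
  · rintro ⟨b', hb', hv⟩
    obtain ⟨b, hb, rfl⟩ := List.mem_map.1 hb'
    obtain ⟨y, hy⟩ := (BHolds_projB b v).1 hv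
    exact ⟨y, b, hb, hy⟩
  · rintro ⟨y, b, hb, hv⟩
    exact ⟨projB b, List.mem_map_of_mem hb, (BHolds_projB b v).2 ⟨y, hv⟩⟩

lemma LHolds_single {n : ℕ} (a : Atom n) (v : Fin n → ℝ) :
    LHolds [ [a] ] v ↔ AHolds a v := by
  constructor
  · rintro ⟨b, hb, hv⟩
    simp only [List.mem_singleton] at hb
    subst hb
    exact hv a (List.mem_singleton_self a)
  · intro h
    exact ⟨[a], List.mem_singleton_self _, fun a' ha' => by
      rw [List.mem_singleton] at ha'; subst ha'; exact h⟩

lemma sum_indicator {N : ℕ} (j : Fin N) (w : Fin N → ℝ) :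
    (∑ i', (Rat.cast (if i' = j then (1:ℚ) else 0) : ℝ) * w i') + ((0:ℚ) : ℝ) = w j := by
  have h : ∀ i' : Fin N,
      (Rat.cast (if i' = j then (1:ℚ) else 0) : ℝ) * w i' = if i' = j then w i' else 0 := by
    intro i'; split <;> simp
  rw [Finset.sum_congr rfl fun i' _ => h i']
  rw [Finset.sum_ite_eq' Finset.univ j w, if_pos (Finset.mem_univ _)]
  simp

/-- Every term of the language realizes as a rational affine function. -/
lemma term_affine {m k : ℕ} (t : ordAddLang.Term (Fin m ⊕ Fin k)) :
    ∃ (c : Fin (m + k) → ℚ) (q : ℚ), ∀ w : Fin (m + k) → ℝ,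
      t.realize (Sum.elim (fun i => w (Fin.castAdd k i)) (fun j => w (Fin.natAdd m j)))
        = (∑ i, (c i : ℝ) * w i) + (q : ℝ) := by
  induction t with
  | var x =>
      rcases x with i | j
      · exact ⟨fun i' => if i' = Fin.castAdd k i then 1 else 0, 0,
          fun w => (sum_indicator (Fin.castAdd k i) w).symm⟩
      · exact ⟨fun i' => if i' = Fin.natAdd m j then 1 else 0, 0,
          fun w => (sum_indicator (Fin.natAdd m j) w).symm⟩
  | func F ts ih =>
      cases F with
      | zero =>
          refine ⟨0, 0, fun w => ?_⟩
          show (0:ℝ) = _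
          simp
      | one =>
          refine ⟨0, 1, fun w => ?_⟩
          show (1:ℝ) = _
          simp
      | add =>
          obtain ⟨c₀, q₀, h₀⟩ := ih 0
          obtain ⟨c₁, q₁, h₁⟩ := ih 1
          refine ⟨fun i => c₀ i + c₁ i, q₀ + q₁, fun w => ?_⟩
          show Language.Term.realize _ (ts 0) + Language.Term.realize _ (ts 1) = _
          rw [h₀ w, h₁ w]
          push_cast
          simp_rw [add_mul]
          rw [Finset.sum_add_distrib]
          ring

lemma sub_atom_val {N : ℕ} (c₁ c₂ : Fin N → ℚ) (q₁ q₂ : ℚ) (fl : Bool) (w : Fin N → ℝ) :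
    aval ((fun i => c₁ i - c₂ i, q₁ - q₂, fl) : Atom N) w
      = ((∑ i, (c₁ i : ℝ) * w i) + (q₁ : ℝ)) - ((∑ i, (c₂ i : ℝ) * w i) + (q₂ : ℝ)) := by
  simp only [aval]
  push_cast
  simp_rw [sub_mul]
  rw [Finset.sum_sub_distrib]
  ring

lemma formula_SL {m : ℕ} : ∀ {k : ℕ} (φ : ordAddLang.BoundedFormula (Fin m) k),
    ∃ l : List (List (Atom (m + k))), ∀ w : Fin (m + k) → ℝ,
      (φ.Realize (fun i => w (Fin.castAdd k i)) (fun j => w (Fin.natAdd m j)) ↔ LHolds l w) := by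
  intro k φ
  induction φ with
  | falsum =>
      refine ⟨[], fun w => ?_⟩
      constructor
      · intro h; exact absurd h (by simp [Language.BoundedFormula.Realize])
      · rintro ⟨b, hb, -⟩; exact absurd hb (List.not_mem_nil)
  | equal t₁ t₂ =>
      obtain ⟨c₁, q₁, h₁⟩ := term_affine t₁
      obtain ⟨c₂, q₂, h₂⟩ := term_affine t₂
      refine ⟨[ [((fun i => c₁ i - c₂ i, q₁ - q₂, false) : Atom (m + _))] ], fun w => ?_⟩
      rw [LHolds_single]
      have hr : (Language.BoundedFormula.equal t₁ t₂).Realize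
          (fun i => w (Fin.castAdd _ i)) (fun j => w (Fin.natAdd m j)) ↔
          Language.Term.realize (Sum.elim (fun i => w (Fin.castAdd _ i)) (fun j => w (Fin.natAdd m j))) t₁
          = Language.Term.realize (Sum.elim (fun i => w (Fin.castAdd _ i)) (fun j => w (Fin.natAdd m j))) t₂ :=
        Iff.rfl
      rw [hr, h₁ w, h₂ w, AHolds]
      simp only [Bool.false_eq_true, if_false]
      rw [sub_atom_val]
      constructor
      · intro h; rw [h]; ring
      · intro h; linarith [h]
  | rel R ts =>
      cases R
      obtain ⟨c₁, q₁, h₁⟩ := term_affine (ts 0)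
      obtain ⟨c₂, q₂, h₂⟩ := term_affine (ts 1)
      refine ⟨[ [((fun i => c₁ i - c₂ i, q₁ - q₂, true) : Atom (m + _))] ], fun w => ?_⟩
      rw [LHolds_single]
      have hr : (Language.BoundedFormula.rel OrdAddRel.lt ts).Realize
          (fun i => w (Fin.castAdd _ i)) (fun j => w (Fin.natAdd m j)) ↔
          Language.Term.realize (Sum.elim (fun i => w (Fin.castAdd _ i)) (fun j => w (Fin.natAdd m j))) (ts 0)
          < Language.Term.realize (Sum.elim (fun i => w (Fin.castAdd _ i)) (fun j => w (Fin.natAdd m j))) (ts 1) :=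
        Iff.rfl
      rw [hr, h₁ w, h₂ w, AHolds]
      simp only [if_true]
      rw [sub_atom_val]
      constructor
      · intro h; linarith
      · intro h; linarith
  | imp φ ψ ihφ ihψ =>
      obtain ⟨lφ, hφ⟩ := ihφ
      obtain ⟨lψ, hψ⟩ := ihψ
      refine ⟨complL lφ ++ lψ, fun w => ?_⟩
      rw [Language.BoundedFormula.realize_imp, LHolds_append, LHolds_complL, ← hφ w, ← hψ w]
      exact imp_iff_not_or
  | all φ ih =>
      rename_i k'
      obtain ⟨l', hl'⟩ := ih
      refine ⟨complL (projL (complL l')), fun w => ?_⟩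
      have key : ∀ y : ℝ,
          (φ.Realize (fun i => w (Fin.castAdd k' i))
            (Fin.snoc (fun j => w (Fin.natAdd m j)) y) ↔ LHolds l' (Fin.snoc w y)) := by
        intro y
        rw [← hl' (Fin.snoc w y)]
        have e1 : (fun i : Fin m => Fin.snoc (α := fun _ => ℝ) w y (Fin.castAdd (k' + 1) i))
            = fun i => w (Fin.castAdd k' i) := by
          funext i
          have h1 : Fin.castAdd (k' + 1) i = Fin.castSucc (Fin.castAdd k' i) :=
            Fin.ext (by simp)
          rw [h1, Fin.snoc_castSucc]
        have e2 : (fun j => Fin.snoc (α := fun _ => ℝ) w y (Fin.natAdd m j))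
            = Fin.snoc (fun j => w (Fin.natAdd m j)) y := by
          funext j
          refine Fin.lastCases ?_ ?_ j
          · have h1 : Fin.natAdd m (Fin.last k') = Fin.last (m + k') := Fin.ext (by simp)
            rw [h1, Fin.snoc_last, Fin.snoc_last]
          · intro j₀
            have h1 : Fin.natAdd m (Fin.castSucc j₀) = Fin.castSucc (Fin.natAdd m j₀) :=
              Fin.ext (by simp)
            rw [h1, Fin.snoc_castSucc, Fin.snoc_castSucc]
        rw [e1, e2]
      rw [Language.BoundedFormula.realize_all, LHolds_complL, LHolds_projL]
      push_neg
      refine forall_congr' fun y => ?_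
      rw [LHolds_complL, not_not, key y]



lemma cl_eq {f g : ℝ → ℝ} (h : ∀ x, f x = g x) (hf : ReLUHClosure f) : ReLUHClosure g := by
  have : f = g := funext h
  rwa [this] at hf

lemma cl_affine (α β : ℚ) : ReLUHClosure (fun x => (α : ℝ) * x + (β : ℝ)) :=
  ReLUHClosure.add (ReLUHClosure.smul α ReLUHClosure.id) (ReLUHClosure.const β)

lemma cl_relu_shift (a : ℚ) : ReLUHClosure (fun x => max (x - (a : ℝ)) 0) := by
  refine cl_eq (fun x => ?_) (ReLUHClosure.relu (cl_affine 1 (-a)))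
  have : ((1:ℚ):ℝ) * x + ((-a : ℚ):ℝ) = x - (a:ℝ) := by push_cast; ring
  rw [this]

lemma cl_H (a : ℚ) : ReLUHClosure (fun x => if (a:ℝ) ≤ x then (1:ℝ) else 0) := by
  refine cl_eq (fun x => ?_) (ReLUHClosure.heaviside (cl_affine 1 (-a)))
  by_cases h : (a:ℝ) ≤ x
  · rw [if_pos (by push_cast; linarith), if_pos h]
  · rw [if_neg (by push_cast; rw [not_le] at h ⊢; linarith), if_neg h]

lemma cl_H' (a : ℚ) : ReLUHClosure (fun x => if x ≤ (a:ℝ) then (1:ℝ) else 0) := by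
  refine cl_eq (fun x => ?_) (ReLUHClosure.heaviside (cl_affine (-1) a))
  by_cases h : x ≤ (a:ℝ)
  · rw [if_pos (by push_cast; linarith), if_pos h]
  · rw [if_neg (by push_cast; rw [not_le] at h ⊢; linarith), if_neg h]

lemma cl_ind (a : ℚ) : ReLUHClosure (fun x => if x = (a:ℝ) then (1:ℝ) else 0) := by
  refine cl_eq (fun x => ?_)
    (ReLUHClosure.add (ReLUHClosure.add (cl_H a) (cl_H' a)) (ReLUHClosure.const (-1)))
  rcases lt_trichotomy x (a:ℝ) with h | h | h
  · rw [if_neg (not_le.2 h), if_pos (le_of_lt h), if_neg (ne_of_lt h)]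
    push_cast; ring
  · rw [if_pos (le_of_eq h.symm), if_pos (le_of_eq h), if_pos h]
    push_cast; ring
  · rw [if_pos (le_of_lt h), if_neg (not_le.2 h), if_neg (ne_of_gt h)]
    push_cast; ring

def SameCell (S : Finset ℚ) (x z : ℝ) : Prop :=
  ∀ a ∈ S, (((a:ℝ) < x ↔ (a:ℝ) < z) ∧ (x < (a:ℝ) ↔ z < (a:ℝ)))

def PW (S : Finset ℚ) (f : ℝ → ℝ) : Prop :=
  ∀ x : ℝ, ∃ α β : ℚ, ∀ z : ℝ, SameCell S x z → f z = (α : ℝ) * z + (β : ℝ)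

lemma sameCell_refl (S : Finset ℚ) (x : ℝ) : SameCell S x x := fun a _ => ⟨Iff.rfl, Iff.rfl⟩

lemma pw_closure : ∀ (N : ℕ) (S : Finset ℚ), S.card = N → ∀ f : ℝ → ℝ, PW S f → ReLUHClosure f := by
  intro N
  induction N with
  | zero =>
      intro S hS f hf
      rw [Finset.card_eq_zero] at hS
      subst hS
      obtain ⟨α, β, h⟩ := hf 0
      exact cl_eq (fun x => (h x (fun a ha => absurd ha (Finset.notMem_empty a))).symm)
        (cl_affine α β)
  | succ N ih =>
      intro S hS f hf
      have hSne : S.Nonempty := Finset.card_pos.1 (by omega)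
      set a := S.max' hSne with ha
      set S' := S.erase a with hS'
      have hcard : S'.card = N := by
        rw [hS', Finset.card_erase_of_mem (S.max'_mem hSne), hS]
        omega
      have hlt : ∀ b ∈ S', b < a := fun b hb =>
        lt_of_le_of_ne (S.le_max' b (Finset.mem_of_mem_erase hb)) (Finset.ne_of_mem_erase hb)
      -- right piece
      obtain ⟨α₁, β₁, h₁⟩ := hf ((a:ℝ) + 1)
      have hright : ∀ z : ℝ, (a:ℝ) < z → f z = (α₁:ℝ) * z + β₁ := by
        intro z hz
        refine h₁ z (fun b hb => ?_)
        have hba : (b:ℝ) ≤ (a:ℝ) := by exact_mod_cast S.le_max' b hb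
        constructor
        · constructor <;> intro <;> linarith
        · constructor <;> intro <;> linarith
      -- value at a
      obtain ⟨αa, βa, hva⟩ := hf (a:ℝ)
      have hfa : f (a:ℝ) = (αa:ℝ) * a + βa := hva _ (sameCell_refl _ _)
      -- left piece: pick a point just to the left of a, above all of S'
      have hx₀ : ∃ x₀ : ℚ, x₀ < a ∧ ∀ b ∈ S', b < x₀ := by
        rcases Finset.eq_empty_or_nonempty S' with he | hne
        · exact ⟨a - 1, by linarith, fun b hb => absurd hb (by rw [he]; exact Finset.notMem_empty b)⟩
        · refine ⟨(S'.max' hne + a) / 2, by linarith [hlt _ (S'.max'_mem hne)], fun b hb => ?_⟩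
          have h1 := S'.le_max' b hb
          have h2 := hlt _ (S'.max'_mem hne)
          linarith
      obtain ⟨x₀, hx₀a, hx₀S⟩ := hx₀
      obtain ⟨α₀, β₀, h₀⟩ := hf (x₀:ℝ)
      have hleft : ∀ z : ℝ, (∀ b ∈ S', (b:ℝ) < z) → z < (a:ℝ) → f z = (α₀:ℝ) * z + β₀ := by
        intro z hz hza
        refine h₀ z (fun b hb => ?_)
        by_cases hbmem : b ∈ S'
        · have h1 : (b:ℝ) < x₀ := by exact_mod_cast hx₀S b hbmem
          have h2 := hz b hbmem
          exact ⟨⟨fun _ => h2, fun _ => h1⟩,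
            ⟨fun h => absurd h (by push_neg; linarith), fun h => absurd h (by push_neg; linarith)⟩⟩
        · have hba : b = a := by
            by_contra hne
            exact hbmem (Finset.mem_erase.2 ⟨hne, hb⟩)
          have h1 : (x₀:ℝ) < (b:ℝ) := by rw [hba]; exact_mod_cast hx₀a
          have h2 : z < (b:ℝ) := by rw [hba]; exact hza
          exact ⟨⟨fun h => absurd h (by push_neg; linarith), fun h => absurd h (by push_neg; linarith)⟩,
            ⟨fun _ => h2, fun _ => h1⟩⟩
      -- correction coefficients
      set γ : ℚ := α₁ - α₀ with hγ
      set δ : ℚ := β₁ - β₀ + (α₁ - α₀) * a with hδ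
      set ε : ℚ := (αa * a + βa) - δ - (α₀ * a + β₀) with hε
      set g : ℝ → ℝ := fun x => f x - (γ:ℝ) * max (x - (a:ℝ)) 0
        - (δ:ℝ) * (if (a:ℝ) ≤ x then (1:ℝ) else 0) - (ε:ℝ) * (if x = (a:ℝ) then (1:ℝ) else 0)
        with hg
      have hgval_lt : ∀ z : ℝ, z < (a:ℝ) → g z = f z := by
        intro z hz
        simp only [hg]
        rw [max_eq_right (by linarith), if_neg (not_le.2 hz), if_neg (ne_of_lt hz)]
        ring
      have hgPW : PW S' g := by
        intro x
        by_cases hx : ∀ b ∈ S', (b:ℝ) < x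
        · refine ⟨α₀, β₀, fun z hz => ?_⟩
          have hzS' : ∀ b ∈ S', (b:ℝ) < z := by
            intro b hb
            exact ((hz b hb).1).1 (hx b hb)
          rcases lt_trichotomy z (a:ℝ) with h | h | h
          · rw [hgval_lt z h]
            exact hleft z hzS' h
          · subst h
            simp only [hg]
            rw [max_eq_right (by linarith), if_pos (le_refl ((a:ℚ):ℝ)), if_pos trivial, hfa]
            rw [hε]
            push_cast
            ring
          · simp only [hg]
            rw [max_eq_left (by linarith), if_pos (le_of_lt h), if_neg (ne_of_gt h),
              hright z h]
            rw [hδ, hγ]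
            push_cast
            ring
        · push_neg at hx
          obtain ⟨b₀, hb₀S, hb₀⟩ := hx
          obtain ⟨αx, βx, hxx⟩ := hf x
          refine ⟨αx, βx, fun z hz => ?_⟩
          have hb₀a : (b₀:ℝ) < (a:ℝ) := by exact_mod_cast hlt b₀ hb₀S
          have hxa : x < (a:ℝ) := lt_of_le_of_lt hb₀ hb₀a
          have hzb₀ : z ≤ (b₀:ℝ) := by
            by_contra hc
            push_neg at hc
            exact absurd (((hz b₀ hb₀S).1).2 hc) (not_lt.2 hb₀)
          have hza : z < (a:ℝ) := lt_of_le_of_lt hzb₀ hb₀a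
          rw [hgval_lt z hza]
          refine hxx z (fun b hb => ?_)
          by_cases hbmem : b ∈ S'
          · exact hz b hbmem
          · have hba : b = a := by
              by_contra hne
              exact hbmem (Finset.mem_erase.2 ⟨hne, hb⟩)
            have h1 : z < (b:ℝ) := by rw [hba]; exact hza
            have h2 : x < (b:ℝ) := by rw [hba]; exact hxa
            exact ⟨⟨fun h => absurd h (by push_neg; linarith), fun h => absurd h (by push_neg; linarith)⟩,
              ⟨fun _ => h1, fun _ => h2⟩⟩
      have hgcl : ReLUHClosure g := ih S' hcard g hgPW
      refine cl_eq (fun x => ?_)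
        (ReLUHClosure.add (ReLUHClosure.add (ReLUHClosure.add hgcl
          (ReLUHClosure.smul γ (cl_relu_shift a))) (ReLUHClosure.smul δ (cl_H a)))
          (ReLUHClosure.smul ε (cl_ind a)))
      simp only [hg]
      ring

lemma aval_two (a : Atom 2) (x y : ℝ) :
    aval a ![x, y] = (a.1 0 : ℝ) * x + (a.1 1 : ℝ) * y + (a.2.1 : ℝ) := by
  simp [aval, Fin.sum_univ_two]

def findEq2 (b : List (Atom 2)) : Option (Atom 2) :=
  b.find? (fun a => a.2.2 = false ∧ a.1 1 ≠ 0)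

def dCoef (e : Atom 2) : ℚ := -e.1 0 / e.1 1
def rCoef (e : Atom 2) : ℚ := -e.2.1 / e.1 1
def ACoef (e a : Atom 2) : ℚ := a.1 0 + a.1 1 * dCoef e
def BCoef (e a : Atom 2) : ℚ := a.1 1 * rCoef e + a.2.1

def critB (b : List (Atom 2)) : List ℚ :=
  match findEq2 b with
  | some e => b.flatMap (fun a => if ACoef e a ≠ 0 then [-BCoef e a / ACoef e a] else [])
  | none => []

lemma aval_subst2 (e a : Atom 2) (t : ℝ) :
    aval a ![t, (dCoef e : ℝ) * t + (rCoef e : ℝ)] = (ACoef e a : ℝ) * t + (BCoef e a : ℝ) := by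
  rw [aval_two]
  simp only [ACoef, BCoef]
  push_cast
  ring

lemma affine_pos_iff (A B : ℚ) (hA : 0 < A) (t : ℝ) :
    ((A:ℝ) * t + (B:ℝ) < 0) ↔ t < ((-B / A : ℚ) : ℝ) := by
  have hA' : (0:ℝ) < (A:ℝ) := by exact_mod_cast hA
  push_cast
  rw [lt_div_iff₀ hA']
  constructor <;> intro h <;> nlinarith

lemma affine_neg_iff (A B : ℚ) (hA : A < 0) (t : ℝ) :
    ((A:ℝ) * t + (B:ℝ) < 0) ↔ ((-B / A : ℚ) : ℝ) < t := by
  have hA' : (A:ℝ) < 0 := by exact_mod_cast hA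
  push_cast
  rw [div_lt_iff_of_neg hA']
  constructor <;> intro h <;> nlinarith

lemma affine_eq_iff (A B : ℚ) (hA : A ≠ 0) (t : ℝ) :
    ((A:ℝ) * t + (B:ℝ) = 0) ↔ t = ((-B / A : ℚ) : ℝ) := by
  have hA' : (A:ℝ) ≠ 0 := by exact_mod_cast hA
  push_cast
  rw [eq_div_iff hA']
  constructor <;> intro h <;> nlinarith

lemma no_eq_empty (f : ℝ → ℝ) (b : List (Atom 2)) (x : ℝ)
    (hne : ∀ a ∈ b, ¬(a.2.2 = false ∧ a.1 1 ≠ 0))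
    (hgraph : ∀ y : ℝ, BHolds b ![x, y] → f x = y)
    (hx : BHolds b ![x, f x]) : False := by
  have hopen : IsOpen {y : ℝ | BHolds b ![x, y]} := by
    clear hx hgraph
    induction b with
    | nil =>
        have h : {y : ℝ | BHolds ([] : List (Atom 2)) ![x, y]} = Set.univ := by
          ext y; simp [BHolds]
        rw [h]; exact isOpen_univ
    | cons a b ih =>
        have hset : {y : ℝ | BHolds (a :: b) ![x, y]}
            = {y | AHolds a ![x, y]} ∩ {y | BHolds b ![x, y]} := by
          ext y
          simp only [Set.mem_inter_iff, Set.mem_setOf_eq, BHolds, List.mem_cons]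
          constructor
          · intro h; exact ⟨h a (Or.inl rfl), fun a' ha' => h a' (Or.inr ha')⟩
          · rintro ⟨h1, h2⟩ a' (rfl | ha')
            · exact h1
            · exact h2 a' ha'
        rw [hset]
        refine IsOpen.inter ?_ (ih (fun a' ha' => hne a' (List.mem_cons_of_mem _ ha')))
        have hna := hne a (List.mem_cons_self)
        cases hfl : a.2.2 with
        | false =>
            have h11 : a.1 1 = 0 := by
              by_contra hne1
              exact hna ⟨hfl, hne1⟩
            have h11' : (a.1 1 : ℝ) = 0 := by exact_mod_cast h11
            by_cases hc : (a.1 0 : ℝ) * x + (a.2.1 : ℝ) = 0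
            · have h : {y : ℝ | AHolds a ![x, y]} = Set.univ := by
                ext y
                simp only [Set.mem_setOf_eq, Set.mem_univ, iff_true, AHolds, hfl,
                  Bool.false_eq_true, if_false]
                rw [aval_two, h11', zero_mul, add_zero]
                exact hc
              rw [h]; exact isOpen_univ
            · have h : {y : ℝ | AHolds a ![x, y]} = ∅ := by
                ext y
                simp only [Set.mem_setOf_eq, Set.mem_empty_iff_false, iff_false, AHolds, hfl,
                  Bool.false_eq_true, if_false]
                rw [aval_two, h11', zero_mul, add_zero]
                exact hc
              rw [h]; exact isOpen_empty
        | true =>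
            have h : {y : ℝ | AHolds a ![x, y]}
                = {y : ℝ | (a.1 0 : ℝ) * x + (a.1 1 : ℝ) * y + (a.2.1 : ℝ) < 0} := by
              ext y
              simp only [Set.mem_setOf_eq, AHolds, hfl, if_true]
              rw [aval_two]
            rw [h]
            exact isOpen_lt (by continuity) continuous_const
  have hsub : {y : ℝ | BHolds b ![x, y]} ⊆ {f x} := fun y hy => by
    rw [Set.mem_singleton_iff]
    exact (hgraph y hy).symm
  obtain ⟨ε, hε, hball⟩ := Metric.isOpen_iff.1 hopen (f x) hx
  have h2 : f x + ε / 2 ∈ Metric.ball (f x) ε := by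
    rw [Metric.mem_ball, Real.dist_eq, show f x + ε / 2 - f x = ε / 2 by ring,
      abs_of_pos (by linarith)]
    linarith
  have h3 := hsub (hball h2)
  rw [Set.mem_singleton_iff] at h3
  linarith

lemma graph_PW (f : ℝ → ℝ) (l : List (List (Atom 2)))
    (hl : ∀ v : Fin 2 → ℝ, (f (v 0) = v 1 ↔ LHolds l v)) :
    PW (l.flatMap critB).toFinset f := by
  intro x
  have hx : LHolds l ![x, f x] := by
    apply (hl ![x, f x]).1
    simp
  obtain ⟨b, hbl, hb⟩ := hx
  rcases hfe : findEq2 b with _ | e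
  · exfalso
    have hfe' : b.find? (fun a => decide (a.2.2 = false ∧ a.1 1 ≠ 0)) = none := hfe
    have hne : ∀ a ∈ b, ¬(a.2.2 = false ∧ a.1 1 ≠ 0) := by
      intro a ha h
      exact (List.find?_eq_none.1 hfe' a ha) (decide_eq_true h)
    refine no_eq_empty f b x hne (fun y hy => ?_) hb
    have h := (hl ![x, y]).2 ⟨b, hbl, hy⟩
    simpa using h
  · have hfe' : b.find? (fun a => decide (a.2.2 = false ∧ a.1 1 ≠ 0)) = some e := hfe
    have heb : e ∈ b := List.mem_of_find?_eq_some hfe'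
    have hep : e.2.2 = false ∧ e.1 1 ≠ 0 := by
      have h1 := List.find?_some hfe'
      simpa using h1
    have he1 : (e.1 1 : ℝ) ≠ 0 := by exact_mod_cast hep.2
    have h0 : aval e ![x, f x] = 0 := by
      have h := hb e heb
      rw [AHolds, hep.1] at h
      simpa using h
    have hfx : f x = (dCoef e : ℝ) * x + (rCoef e : ℝ) := by
      rw [aval_two] at h0
      have h1 : (e.1 1 : ℝ) * f x = -((e.1 0 : ℝ) * x + (e.2.1 : ℝ)) := by linarith
      have h2 : (e.1 1 : ℝ) * ((dCoef e : ℝ) * x + (rCoef e : ℝ))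
          = -((e.1 0 : ℝ) * x + (e.2.1 : ℝ)) := by
        simp only [dCoef, rCoef]
        push_cast
        field_simp
        ring
      exact mul_left_cancel₀ he1 (h1.trans h2.symm)
    refine ⟨dCoef e, rCoef e, fun z hz => ?_⟩
    have hbz : BHolds b ![z, (dCoef e : ℝ) * z + (rCoef e : ℝ)] := by
      intro a ha
      have hax : AHolds a ![x, (dCoef e : ℝ) * x + (rCoef e : ℝ)] := by
        have h := hb a ha
        rwa [hfx] at h
      by_cases hA : ACoef e a = 0
      · have hv : aval a ![z, (dCoef e : ℝ) * z + (rCoef e : ℝ)]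
            = aval a ![x, (dCoef e : ℝ) * x + (rCoef e : ℝ)] := by
          rw [aval_subst2, aval_subst2, hA]
          push_cast
          ring
        exact (AHolds_congr _ _ _ _ hv rfl).2 hax
      · set crit : ℚ := -BCoef e a / ACoef e a with hcrit
        have hmem : crit ∈ (l.flatMap critB).toFinset := by
          rw [List.mem_toFinset, List.mem_flatMap]
          refine ⟨b, hbl, ?_⟩
          have hc : critB b = b.flatMap
              (fun a => if ACoef e a ≠ 0 then [-BCoef e a / ACoef e a] else []) := by
            rw [critB, hfe]
          rw [hc, List.mem_flatMap]
          refine ⟨a, ha, ?_⟩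
          rw [if_pos hA, hcrit]
          exact List.mem_singleton_self _
        obtain ⟨hc1, hc2⟩ := hz crit (by exact hmem)
        cases hfl : a.2.2 with
        | false =>
            have haxv : (ACoef e a : ℝ) * x + (BCoef e a : ℝ) = 0 := by
              have h := hax
              rw [AHolds, hfl] at h
              simp only [Bool.false_eq_true, if_false] at h
              rwa [aval_subst2] at h
            have hxc : x = (crit : ℝ) := by
              rw [hcrit]
              exact (affine_eq_iff _ _ hA _).1 haxv
            have hzc : z = (crit : ℝ) := by
              by_contra hcz
              rcases lt_or_gt_of_ne hcz with h | h
              · have := hc2.2 h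
                rw [hxc] at this
                exact lt_irrefl _ this
              · have := hc1.2 h
                rw [hxc] at this
                exact lt_irrefl _ this
            rw [AHolds, hfl]
            simp only [Bool.false_eq_true, if_false]
            rw [aval_subst2]
            exact (affine_eq_iff _ _ hA _).2 (by rw [hzc, hcrit])
        | true =>
            have haxv : (ACoef e a : ℝ) * x + (BCoef e a : ℝ) < 0 := by
              have h := hax
              rw [AHolds, hfl] at h
              simp only [if_true] at h
              rwa [aval_subst2] at h
            rw [AHolds, hfl]
            simp only [if_true]
            rw [aval_subst2]
            rcases lt_or_gt_of_ne hA with hAneg | hApos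
            · have hcx : (crit : ℝ) < x := by
                rw [hcrit]
                exact (affine_neg_iff _ _ hAneg x).1 haxv
              have hcz : (crit : ℝ) < z := hc1.1 hcx
              exact (affine_neg_iff _ _ hAneg z).2 (by rw [← hcrit]; exact hcz)
            · have hcx : x < (crit : ℝ) := by
                rw [hcrit]
                exact (affine_pos_iff _ _ hApos x).1 haxv
              have hcz : z < (crit : ℝ) := hc2.1 hcx
              exact (affine_pos_iff _ _ hApos z).2 (by rw [← hcrit]; exact hcz)
    have h := (hl ![z, (dCoef e : ℝ) * z + (rCoef e : ℝ)]).2 ⟨b, hbl, hbz⟩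
    simpa using h

lemma graph_SL (f : ℝ → ℝ)
    (hf : Semilinear (n := 1) (fun v => f (v 0))) :
    ∃ l : List (List (Atom 2)), ∀ v : Fin 2 → ℝ, (f (v 0) = v 1 ↔ LHolds l v) := by
  obtain ⟨φ, hφ⟩ := Set.empty_definable_iff.1 hf
  obtain ⟨l, hlf⟩ := formula_SL (m := 2) (k := 0) φ
  refine ⟨l, fun v => ?_⟩
  have hv : (f (v 0) = v 1) ↔ φ.Realize v := by
    have h := Set.ext_iff.1 hφ v
    simpa using h
  rw [hv]
  have e1 : (fun i : Fin 2 => v (Fin.castAdd 0 i)) = v := by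
    funext i
    exact congrArg v (Fin.ext (by simp))
  have h3 := hlf v
  rw [e1] at h3
  have h4 : φ.Realize v ↔
      Language.BoundedFormula.Realize φ v (fun j : Fin 0 => v (Fin.natAdd 2 j)) := by
    unfold Language.Formula.Realize
    exact iff_of_eq (congrArg
      (fun xs : Fin 0 → ℝ => Language.BoundedFormula.Realize φ v xs)
      (Subsingleton.elim _ _))
  rw [h4]
  exact h3

end SLAux

/-- Every unary semilinear function is expressible from rational affine functions,

`ReLU`, and the Heaviside step function. -/
theorem unary_semilinear_mem_reluH_closure (f : ℝ → ℝ)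
    (hf : Semilinear (n := 1) (fun v => f (v 0))) : ReLUHClosure f := by
  obtain ⟨l, hl⟩ := SLAux.graph_SL f hf
  exact SLAux.pw_closure _ _ rfl f (SLAux.graph_PW f l hl)
end

section
/- Let f : ℝ × ℝ → ℝ^d be a function built by finitely many compositions of affine maps with rational coefficients and coordinate-wise applications of ReLU and the Heaviside function H. Then f is eventually linear in its first argument with slope independent of the second argument: there exist a vector a ∈ ℝ^d and, for each y ∈ ℝ, a threshold S_y ∈ ℝ and vector b_y ∈ ℝ^d such that f(x, y) = a·x + b_y for all x ≥ S_y. -/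
/-- The class `FFN(ReLU, H)` of functions `ℝ × ℝ → ℝ^d`: built from the two inputs by
finitely many compositions of affine maps with rational coefficients and coordinate-wise
applications of `ReLU` and the Heaviside function `H`. -/
inductive FFNReLUH2 : {d : ℕ} → (ℝ → ℝ → (Fin d → ℝ)) → Prop
  | input : FFNReLUH2 (d := 2) (fun x y => ![x, y])
  | affine {d e : ℕ} (A : Fin e → Fin d → ℚ) (b : Fin e → ℚ) {f : ℝ → ℝ → (Fin d → ℝ)} :
      FFNReLUH2 f →
      FFNReLUH2 (d := e) (fun x y i => (∑ j, (A i j : ℝ) * f x y j) + (b i : ℝ))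
  | relu {d : ℕ} {f : ℝ → ℝ → (Fin d → ℝ)} :
      FFNReLUH2 f → FFNReLUH2 (fun x y i => max (f x y i) 0)
  | heaviside {d : ℕ} {f : ℝ → ℝ → (Fin d → ℝ)} :
      FFNReLUH2 f → FFNReLUH2 (fun x y i => if 0 ≤ f x y i then (1 : ℝ) else 0)

/-- Any `FFN(ReLU, H)` function `f : ℝ × ℝ → ℝ^d` is eventually linear in its first
argument, with a slope `a` independent of the second argument: for each `y` there are a
threshold `S_y` and an offset `b_y` with `f (x, y) = a • x + b_y` for all `x ≥ S_y`. -/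
theorem ffnReLUH_eventually_linear_in_first_arg {d : ℕ} (f : ℝ → ℝ → (Fin d → ℝ))
    (hf : FFNReLUH2 f) :
    ∃ a : Fin d → ℝ, ∀ y : ℝ, ∃ S : ℝ, ∃ b : Fin d → ℝ,
      ∀ x : ℝ, S ≤ x → ∀ i, f x y i = a i * x + b i := by
  induction hf with
  | input =>
    refine ⟨![1, 0], fun y => ⟨0, ![0, y], fun x hx i => ?_⟩⟩
    fin_cases i <;> simp
  | affine A c hf ih =>
    obtain ⟨a, ha⟩ := ih
    refine ⟨fun i => ∑ j, (A i j : ℝ) * a j, fun y => ?_⟩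
    obtain ⟨S, b, hb⟩ := ha y
    refine ⟨S, fun i => (∑ j, (A i j : ℝ) * b j) + (c i : ℝ), fun x hx i => ?_⟩
    simp only [hb x hx]
    rw [Finset.sum_mul,
      show (∑ j, (A i j : ℝ) * (a j * x + b j))
          = ∑ j, ((A i j : ℝ) * a j * x + (A i j : ℝ) * b j) from
        Finset.sum_congr rfl (fun j _ => by ring),
      Finset.sum_add_distrib]
    ring
  | relu hf ih =>
    obtain ⟨a, ha⟩ := ih
    refine ⟨fun i => max (a i) 0, fun y => ?_⟩
    obtain ⟨S, b, hb⟩ := ha y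
    obtain ⟨M, hM⟩ := Finset.exists_le (Finset.univ.image (fun i => -b i / a i + 1))
    refine ⟨max S M,
      fun i => if 0 < a i then b i else if a i < 0 then 0 else max (b i) 0,
      fun x hx i => ?_⟩
    have hxS : S ≤ x := le_trans (le_max_left _ _) hx
    have hxM : ∀ i, -b i / a i + 1 ≤ x := fun i =>
      le_trans (le_trans (hM _ (Finset.mem_image_of_mem _ (Finset.mem_univ i)))
        (le_max_right S M)) hx
    simp only [hb x hxS]
    rcases lt_trichotomy (a i) 0 with h | h | h
    · have h1 : -b i / a i ≤ x := by linarith [hxM i]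
      have h2 : x * a i ≤ -b i := (div_le_iff_of_neg h).mp h1
      have h3 : a i * x + b i ≤ 0 := by nlinarith
      rw [max_eq_right h3, max_eq_right h.le, if_neg (by linarith), if_pos h]
      ring
    · simp [h]
    · have h1 : -b i / a i ≤ x := by linarith [hxM i]
      have h2 : -b i ≤ x * a i := (div_le_iff₀ h).mp h1
      have h3 : 0 ≤ a i * x + b i := by nlinarith
      rw [max_eq_left h3, max_eq_left h.le, if_pos h]
  | heaviside hf ih =>
    obtain ⟨a, ha⟩ := ih
    refine ⟨fun _ => 0, fun y => ?_⟩
    obtain ⟨S, b, hb⟩ := ha y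
    obtain ⟨M, hM⟩ := Finset.exists_le (Finset.univ.image (fun i => -b i / a i + 1))
    refine ⟨max S M,
      fun i => if 0 < a i then 1 else if a i < 0 then 0 else if 0 ≤ b i then 1 else 0,
      fun x hx i => ?_⟩
    have hxS : S ≤ x := le_trans (le_max_left _ _) hx
    have hxM : ∀ i, -b i / a i + 1 ≤ x := fun i =>
      le_trans (le_trans (hM _ (Finset.mem_image_of_mem _ (Finset.mem_univ i)))
        (le_max_right S M)) hx
    simp only [hb x hxS]
    rcases lt_trichotomy (a i) 0 with h | h | h
    · have h1 : -b i / a i ≤ x - 1 := by linarith [hxM i]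
      have h2 : (x - 1) * a i ≤ -b i := (div_le_iff_of_neg h).mp h1
      have h3 : ¬ (0 ≤ a i * x + b i) := by nlinarith
      rw [if_neg h3, if_neg (by linarith), if_pos h]
      ring
    · simp [h]
    · have h1 : -b i / a i ≤ x := by linarith [hxM i]
      have h2 : -b i ≤ x * a i := (div_le_iff₀ h).mp h1
      have h3 : 0 ≤ a i * x + b i := by nlinarith
      rw [if_pos h3, if_pos h]
      ring
end

section
/- Let f : ℝ × ℝ → ℝ be in FFN(ReLU, H) and let Ω ⊂ ℝ be finite. Then there exist S ∈ ℝ, M ∈ ℝ, and a relation ≈ which is either ≤ or ≥, such that for all y, y' ∈ Ω and all x, x' ≥ S: either f(·, y) is constant on [S, ∞), or (x' ≈ x + M implies f(x, y) ≤ f(x', y')). -/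
private lemma thresh {a c x : ℝ} (h0 : a ≠ 0) (hx : |c / a| < x) :
    (0 < a → 0 < a * x + c) ∧ (a < 0 → a * x + c < 0) := by
  have h1 : -(c / a) < x := lt_of_le_of_lt (neg_le_abs _) hx
  have h3 : c / a * a = c := div_mul_cancel₀ c h0
  constructor <;> intro h
  · have h2 : (-(c / a)) * a < x * a := mul_lt_mul_of_pos_right h1 h
    nlinarith
  · have h2 : x * a < (-(c / a)) * a := mul_lt_mul_of_neg_right h1 h
    nlinarith

private lemma ffn_eventually_affine : ∀ {d : ℕ} {f : ℝ → ℝ → (Fin d → ℝ)}, FFNReLUH2 f →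
    ∃ a : Fin d → ℝ, ∀ y : ℝ, ∃ S : ℝ, ∃ b : Fin d → ℝ,
      ∀ x : ℝ, S ≤ x → ∀ i, f x y i = a i * x + b i := by
  intro d f hf
  induction hf with
  | input =>
    refine ⟨![1, 0], fun y => ⟨0, ![0, y], fun x hx i => ?_⟩⟩
    fin_cases i <;> simp
  | affine A bq hf ih =>
    obtain ⟨a, ha⟩ := ih
    refine ⟨fun i => ∑ j, (A i j : ℝ) * a j, fun y => ?_⟩
    obtain ⟨S, c, hc⟩ := ha y
    refine ⟨S, fun i => (∑ j, (A i j : ℝ) * c j) + (bq i : ℝ), fun x hx i => ?_⟩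
    simp only [hc x hx]
    simp only [mul_add, ← mul_assoc, Finset.sum_add_distrib, Finset.sum_mul]
    ring
  | relu hf ih =>
    obtain ⟨a, ha⟩ := ih
    refine ⟨fun i => max (a i) 0, fun y => ?_⟩
    obtain ⟨S, c, hc⟩ := ha y
    refine ⟨max S 0 + (∑ j, |c j / a j|) + 1,
      fun i => if 0 < a i then c i else if a i < 0 then 0 else max (c i) 0,
      fun x hx i => ?_⟩
    have hsum : (0:ℝ) ≤ ∑ j, |c j / a j| := Finset.sum_nonneg fun j _ => abs_nonneg _
    have hS : S ≤ x := by
      have := le_max_left S 0; linarith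
    have hxi : |c i / a i| < x := by
      have h1 : |c i / a i| ≤ ∑ j, |c j / a j| :=
        Finset.single_le_sum (f := fun j => |c j / a j|) (fun j _ => abs_nonneg _)
          (Finset.mem_univ i)
      have := le_max_right S 0; linarith
    dsimp only
    rw [hc x hS i]
    rcases lt_trichotomy (a i) 0 with h | h | h
    · have hneg := (thresh (ne_of_lt h) hxi).2 h
      simp [max_eq_right hneg.le, if_neg (not_lt.mpr h.le), if_pos h]
      exact Or.inl h.le
    · simp [h]
    · have hpos := (thresh (ne_of_gt h) hxi).1 h
      simp [max_eq_left hpos.le, if_pos h]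
      exact Or.inl h.le
  | heaviside hf ih =>
    obtain ⟨a, ha⟩ := ih
    refine ⟨fun _ => 0, fun y => ?_⟩
    obtain ⟨S, c, hc⟩ := ha y
    refine ⟨max S 0 + (∑ j, |c j / a j|) + 1,
      fun i => if 0 < a i then 1 else if a i < 0 then 0 else if 0 ≤ c i then 1 else 0,
      fun x hx i => ?_⟩
    have hsum : (0:ℝ) ≤ ∑ j, |c j / a j| := Finset.sum_nonneg fun j _ => abs_nonneg _
    have hS : S ≤ x := by
      have := le_max_left S 0; linarith
    have hxi : |c i / a i| < x := by
      have h1 : |c i / a i| ≤ ∑ j, |c j / a j| :=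
        Finset.single_le_sum (f := fun j => |c j / a j|) (fun j _ => abs_nonneg _)
          (Finset.mem_univ i)
      have := le_max_right S 0; linarith
    dsimp only
    rw [hc x hS i]
    rcases lt_trichotomy (a i) 0 with h | h | h
    · have hneg := (thresh (ne_of_lt h) hxi).2 h
      simp [if_neg (not_le.mpr hneg), if_neg (not_lt.mpr h.le), if_pos h]
    · simp [h]
    · have hpos := (thresh (ne_of_gt h) hxi).1 h
      simp [if_pos hpos.le, if_pos h]

/-- For `f : ℝ × ℝ → ℝ` in `FFN(ReLU, H)` and a finite set `Ω ⊂ ℝ` there are `S, M ∈ ℝ`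
and a relation `≈` (either `≤` or `≥`) such that for all `y, y' ∈ Ω` and `x, x' ≥ S`:
either `f (·, y)` is constant on `[S, ∞)`, or `x' ≈ x + M` implies `f (x, y) ≤ f (x', y')`. -/
theorem ffnReLUH_collision_lemma (f : ℝ → ℝ → ℝ)
    (hf : FFNReLUH2 (d := 1) (fun x y _ => f x y)) (Ω : Finset ℝ) :
    ∃ (S M : ℝ) (r : ℝ → ℝ → Prop), (r = (· ≤ ·) ∨ r = (· ≥ ·)) ∧
      ∀ y ∈ Ω, ∀ y' ∈ Ω, ∀ x x' : ℝ, S ≤ x → S ≤ x' →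
        ((∀ x₁ x₂ : ℝ, S ≤ x₁ → S ≤ x₂ → f x₁ y = f x₂ y) ∨
          (r x' (x + M) → f x y ≤ f x' y')) := by
  obtain ⟨a, ha⟩ := ffn_eventually_affine hf
  choose Sf bf hb using ha
  set α : ℝ := a 0 with hα
  rcases Finset.eq_empty_or_nonempty Ω with hΩ | hΩ
  · exact ⟨0, 0, (· ≤ ·), Or.inl rfl, by simp [hΩ]⟩
  set S₀ : ℝ := Ω.sup' hΩ Sf with hS₀
  set β : ℝ → ℝ := fun y => bf y 0 with hβ
  have hfx : ∀ y ∈ Ω, ∀ x : ℝ, S₀ ≤ x → f x y = α * x + β y := by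
    intro y hy x hx
    have hSy : Sf y ≤ x := le_trans (Finset.le_sup' Sf hy) hx
    exact hb y x hSy 0
  rcases lt_trichotomy α 0 with h | h | h
  · -- negative slope: r = ≤
    set Bmax : ℝ := Ω.sup' hΩ β with hBmax
    set Bmin : ℝ := Ω.inf' hΩ β with hBmin
    refine ⟨S₀, (Bmax - Bmin) / α, (· ≤ ·), Or.inl rfl, fun y hy y' hy' x x' hx hx' => ?_⟩
    right
    intro hr
    have hM : α * ((Bmax - Bmin) / α) = Bmax - Bmin := mul_div_cancel₀ _ (ne_of_lt h)
    have h1 : α * x' ≥ α * (x + (Bmax - Bmin) / α) := mul_le_mul_of_nonpos_left hr h.le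
    have h2 : β y ≤ Bmax := Finset.le_sup' β hy
    have h3 : Bmin ≤ β y' := Finset.inf'_le β hy'
    rw [hfx y hy x hx, hfx y' hy' x' hx']
    nlinarith
  · -- zero slope: constant
    refine ⟨S₀, 0, (· ≤ ·), Or.inl rfl, fun y hy y' hy' x x' hx hx' => ?_⟩
    left
    intro x₁ x₂ h1 h2
    rw [hfx y hy x₁ h1, hfx y hy x₂ h2, h]
    ring
  · -- positive slope: r = ≥
    set Bmax : ℝ := Ω.sup' hΩ β with hBmax
    set Bmin : ℝ := Ω.inf' hΩ β with hBmin
    refine ⟨S₀, (Bmax - Bmin) / α, (· ≥ ·), Or.inr rfl, fun y hy y' hy' x x' hx hx' => ?_⟩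
    right
    intro hr
    have hM : α * ((Bmax - Bmin) / α) = Bmax - Bmin := mul_div_cancel₀ _ (ne_of_gt h)
    have h1 : α * (x + (Bmax - Bmin) / α) ≤ α * x' := mul_le_mul_of_nonneg_left hr h.le
    have h2 : β y ≤ Bmax := Finset.le_sup' β hy
    have h3 : Bmin ≤ β y' := Finset.inf'_le β hy'
    rw [hfx y hy x hx, hfx y' hy' x' hx']
    nlinarith
end

section
/- For every k, d ≥ 1 there is a finite group Γ with a generating set Δ of size d such that (1) every δ ∈ Δ satisfies δ = δ⁻¹, and (2) for every ℓ ≥ 1 and δ₁,...,δ_ℓ ∈ Δ with δᵢ ≠ δᵢ₊₁ for all i, if δ₁⋯δ_ℓ = 1 then ℓ ≥ k. -/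
/-- `Δ` is a generating set of size `d` for the finite group `Γ` consisting of
involutions, such that any product of fewer than `k` generators in which no two
consecutive factors are equal is nontrivial. -/
def IsHighGirthGenSet (Γ : Type) [Group Γ] (Δ : Finset Γ) (k d : ℕ) : Prop :=
  Δ.card = d ∧
  Subgroup.closure (Δ : Set Γ) = ⊤ ∧
  (∀ δ ∈ Δ, δ = δ⁻¹) ∧
  (∀ l : List Γ, l ≠ [] → (∀ x ∈ l, x ∈ Δ) → l.Chain' (· ≠ ·) →
    l.prod = 1 → k ≤ l.length)



namespace HighGirth

variable {d n : ℕ}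

/-- The ball of radius `n` in the `d`-regular tree: reduced words of length `≤ n`. -/
def V (d n : ℕ) := {l : List (Fin d) // l.Chain' (· ≠ ·) ∧ l.length ≤ n}

instance : DecidableEq (V d n) := Subtype.instDecidableEq

noncomputable instance : Fintype (V d n) := by
  classical
  apply Fintype.ofInjective (fun v : V d n => fun i : Fin (n+1) => v.1[i.1]?)
  rintro ⟨a, _, ha⟩ ⟨b, _, hb⟩ h
  apply Subtype.ext
  show a = b
  apply List.ext_getElem?
  intro m
  by_cases hm : m < n + 1
  · exact congrFun h ⟨m, hm⟩
  · rw [List.getElem?_eq_none_iff.2, List.getElem?_eq_none_iff.2] <;> omega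

def fAux (n : ℕ) (i : Fin d) : List (Fin d) → List (Fin d)
  | [] => [i]
  | (j :: t) => if j = i then t else (if t.length + 2 ≤ n then i :: j :: t else j :: t)

lemma fAux_mem (hn : 1 ≤ n) (i : Fin d) (l : List (Fin d))
    (h : l.Chain' (· ≠ ·) ∧ l.length ≤ n) :
    (fAux n i l).Chain' (· ≠ ·) ∧ (fAux n i l).length ≤ n := by
  match l with
  | [] => simpa [fAux, List.Chain']
  | j :: t =>
    by_cases hj : j = i
    · simp only [fAux, if_pos hj]
      exact ⟨h.1.tail, le_trans (by simp) h.2⟩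
    · by_cases hl : t.length + 2 ≤ n
      · simp only [fAux, if_neg hj, if_pos hl]
        refine ⟨List.isChain_cons_cons.2 ⟨Ne.symm hj, h.1⟩, by simp; omega⟩
      · simp only [fAux, if_neg hj, if_neg hl]
        exact h

def f (hn : 1 ≤ n) (i : Fin d) (v : V d n) : V d n :=
  ⟨fAux n i v.1, fAux_mem hn i v.1 v.2⟩

lemma f_invol (hn : 1 ≤ n) (i : Fin d) : Function.Involutive (f (d := d) hn i) := by
  rintro ⟨l, hc, hl⟩
  apply Subtype.ext
  show fAux n i (fAux n i l) = l
  match l with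
  | [] => simp [fAux, hn]
  | j :: t =>
    by_cases hj : j = i
    · subst hj
      simp only [fAux, if_pos rfl]
      match t with
      | [] => simp [fAux]
      | a :: t' =>
        have haj : a ≠ j := (List.isChain_cons_cons.1 hc).1.symm
        have : t'.length + 2 ≤ n := by simp at hl; omega
        simp [fAux, haj, this]
    · by_cases hl2 : t.length + 2 ≤ n
      · simp [fAux, hj, hl2]
      · simp [fAux, hj, hl2]

/-- The generator permutations. -/
noncomputable def gen (hn : 1 ≤ n) (i : Fin d) : Equiv.Perm (V d n) :=
  (f_invol hn i).toPerm

lemma gen_inv (hn : 1 ≤ n) (i : Fin d) : (gen hn i)⁻¹ = gen hn i :=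
  Equiv.ext fun _ => rfl

lemma gen_apply (hn : 1 ≤ n) (i : Fin d) (v : V d n) :
    gen hn i v = ⟨fAux n i v.1, fAux_mem hn i v.1 v.2⟩ := rfl

/-- pushing onto a shorter reduced word. -/
lemma gen_push (hn : 1 ≤ n) (i : Fin d) (t : List (Fin d)) (ht : (i :: t).Chain' (· ≠ ·))
    (hlen : (i :: t).length ≤ n) (h2 : t.Chain' (· ≠ ·) ∧ t.length ≤ n) :
    gen hn i ⟨t, h2⟩ = ⟨i :: t, ht, hlen⟩ := by
  apply Subtype.ext
  show fAux n i t = i :: t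
  match t with
  | [] => rfl
  | a :: t' =>
    have hai : a ≠ i := ((List.isChain_cons_cons.1 ht).1).symm
    have : t'.length + 2 ≤ n := by simp at hlen; omega
    simp [fAux, hai, this]

lemma key (hn : 1 ≤ n) (w : List (Fin d)) (hc : w.Chain' (· ≠ ·)) (hl : w.length ≤ n) :
    ((w.map (gen hn)).prod : Equiv.Perm (V d n)) ⟨[], by simp [List.Chain']⟩ = ⟨w, hc, hl⟩ := by
  induction w with
  | nil => rfl
  | cons i t ih =>
    have ht : t.Chain' (· ≠ ·) := hc.tail
    have hlt : t.length ≤ n := le_trans (by simp) hl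
    simp only [List.map_cons, List.prod_cons, Equiv.Perm.coe_mul, Function.comp_apply, ih ht hlt]
    exact (congrArg (gen hn i) (ih ht hlt)).trans (gen_push hn i t hc hl ⟨ht, hlt⟩)

end HighGirth


open HighGirth in
/-- For all `k, d ≥ 1` there is a finite group with a `d`-element generating set of
involutions in which every product of fewer than `k` generators, no two consecutive
ones equal, is nontrivial. -/
theorem exists_finite_group_with_high_girth_generators (k d : ℕ)
    (hk : 1 ≤ k) (hd : 1 ≤ d) :
    ∃ (Γ : Type) (_ : Fintype Γ) (g : Group Γ) (Δ : Finset Γ),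
      @IsHighGirthGenSet Γ g Δ k d := by
  classical
  set n := max k 2 - 1 with hndef
  have hn : 1 ≤ n := by omega
  set S : Set (Equiv.Perm (V d n)) := Set.range (gen hn) with hS
  refine ⟨Subgroup.closure S, Fintype.ofFinite _, inferInstance, ?_⟩
  set Γ := Subgroup.closure S
  have i0 : Fin d := ⟨0, hd⟩
  let e : Fin d → Γ := fun i => ⟨gen hn i, Subgroup.subset_closure ⟨i, rfl⟩⟩
  have geninj : Function.Injective (gen (d := d) hn) := by
    intro i j hij
    have := congrArg (fun (p : Equiv.Perm (V d n)) => (p ⟨[], by simp [List.Chain']⟩).1) hij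
    change [i] = [j] at this
    simpa [fAux] using this
  have einj : Function.Injective e := by
    intro i j hij
    exact geninj (congrArg Subtype.val hij)
  refine ⟨Finset.univ.image e, ?_, ?_, ?_, ?_⟩
  · rw [Finset.card_image_of_injective _ einj, Finset.card_univ, Fintype.card_fin]
  · have hset : ((Finset.univ.image e : Finset Γ) : Set Γ)
        = ((↑) : Γ → Equiv.Perm (V d n)) ⁻¹' S := by
      ext x
      simp only [Finset.coe_image, Finset.coe_univ, Set.image_univ, Set.mem_range,
        Set.mem_preimage, hS]
      constructor
      · rintro ⟨i, rfl⟩; exact ⟨i, rfl⟩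
      · rintro ⟨i, hi⟩; exact ⟨i, Subtype.ext hi⟩
    rw [hset]
    exact Subgroup.closure_closure_coe_preimage
  · intro δ hδ
    simp only [Finset.mem_image] at hδ
    obtain ⟨i, -, rfl⟩ := hδ
    apply Subtype.ext
    have h2 : (((e i)⁻¹ : Γ) : Equiv.Perm (V d n)) = ((e i : Γ) : Equiv.Perm (V d n))⁻¹ := rfl
    rw [h2]
    exact (gen_inv hn i).symm
  · intro l hne hmem hch hprod
    have hkk : k ≤ max k 2 := le_max_left _ _
    refine le_trans hkk ?_
    by_contra hlen
    push_neg at hlen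
    have hlen' : l.length ≤ n := by omega
    let g : Γ → Fin d := fun x => if h : ∃ i, e i = x then h.choose else i0
    have hg : ∀ x ∈ Finset.univ.image e, e (g x) = x := by
      intro x hx
      simp only [Finset.mem_image, Finset.mem_univ, true_and] at hx
      have h : ∃ i, e i = x := hx
      simp only [g, dif_pos h]
      exact h.choose_spec
    set w := l.map g with hw
    have hle : w.map e = l := by
      rw [hw, List.map_map]
      have : ∀ x ∈ l, (e ∘ g) x = id x := fun x hx => hg x (hmem x hx)
      rw [List.map_congr_left this, List.map_id]
    have hwc : w.Chain' (· ≠ ·) := by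
      have := hch
      rw [← hle, List.Chain', List.isChain_map] at this
      exact this.imp fun a b hab h => hab (by rw [h])
    have hwl : w.length ≤ n := by
      rw [hw, List.length_map]; exact hlen'
    have h1 : l.map Γ.subtype = w.map (gen hn) := by
      conv_lhs => rw [← hle]
      rw [List.map_map]
      exact List.map_congr_left fun x _ => rfl
    have hprod' : ((w.map (gen hn)).prod : Equiv.Perm (V d n)) = 1 := by
      rw [← h1, ← map_list_prod Γ.subtype l, hprod, map_one]
    have := key hn w hwc hwl
    rw [hprod'] at this
    have hwnil : w = [] := by
      have := congrArg Subtype.val this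
      exact this.symm
    apply hne
    rw [← hle, hwnil, List.map_nil]
end

section
/- Let G^u and H^v be pointed finite trees (acyclic connected graphs with a distinguished node and node labels). If u and v receive the same color after r rounds of color refinement (starting from the labeling-based initial coloring), then the subtrees induced by the vertices at distance at most r from u and from v, respectively, are isomorphic as pointed labeled graphs. -/
/-- The type of color-refinement colors after `r` rounds, starting from colors in `L`. -/
def CRColor (L : Type) : ℕ → Type
  | 0 => L
  | r + 1 => CRColor L r × Multiset (CRColor L r)

/-- Color refinement: the color of a node after `r` rounds, starting from the initial
coloring `col`.  Each round pairs the previous color with the multiset of the previous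
colors of the neighbors (pairing plays the role of an injective hash). -/
def crIter {V L : Type} [Fintype V] (G : SimpleGraph V) [DecidableRel G.Adj]
    (col : V → L) : (r : ℕ) → V → CRColor L r
  | 0 => col
  | r + 1 => fun v =>
      (crIter G col r v, (G.neighborFinset v).val.map (crIter G col r))

open SimpleGraph Walk

section CRlemmas
variable {V W L : Type} [Fintype V] [Fintype W]
    (G : SimpleGraph V) (H : SimpleGraph W) [DecidableRel G.Adj] [DecidableRel H.Adj]
    (labG : V → L) (labH : W → L)

lemma crProj {r : ℕ} {a : V} {b : W}
    (h : crIter G labG (r+1) a = crIter H labH (r+1) b) :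
    crIter G labG r a = crIter H labH r b := by
  simp only [crIter] at h
  exact (Prod.ext_iff.mp h).1

lemma crNbr {r : ℕ} {a : V} {b : W}
    (h : crIter G labG (r+1) a = crIter H labH (r+1) b) :
    (G.neighborFinset a).val.map (crIter G labG r)
      = (H.neighborFinset b).val.map (crIter H labH r) := by
  simp only [crIter] at h
  exact (Prod.ext_iff.mp h).2

lemma crLab : ∀ {r : ℕ} {a : V} {b : W},
    crIter G labG r a = crIter H labH r b → labG a = labH b
  | 0, a, b, h => h
  | r+1, a, b, h => crLab (crProj G H labG labH h)

end CRlemmas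

section TreeLemmas
variable {V : Type} [DecidableEq V] {G : SimpleGraph V}

lemma conn_dist_zero (hc : G.Connected) {a b : V} (h : G.dist a b = 0) : a = b := by
  rcases SimpleGraph.dist_eq_zero_iff_eq_or_not_reachable.mp h with h | h
  · exact h
  · exact absurd (hc.preconnected a b) h

lemma tree_path_unique (hG : G.IsTree) {u v : V} {p q : G.Walk u v}
    (hp : p.IsPath) (hq : q.IsPath) : p = q :=
  ((hG.existsUnique_path u v).unique hp hq)

lemma tree_path_dist (hG : G.IsTree) {u v : V} {p : G.Walk u v} (hp : p.IsPath) :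
    p.length = G.dist u v := by
  obtain ⟨q, hq⟩ := hG.isConnected.exists_walk_length_eq_dist u v
  rw [tree_path_unique hG hp (q.isPath_of_length_eq_dist hq), hq]

lemma tree_support_dist (hG : G.IsTree) {y z w : V} {P : G.Walk y z}
    (hP : P.IsPath) (hw : w ∈ P.support) :
    G.dist y w + G.dist w z = G.dist y z := by
  have h1 := tree_path_dist hG (hP.takeUntil hw)
  have h2 := tree_path_dist hG (hP.dropUntil hw)
  have h3 := congrArg Walk.length (P.take_spec hw)
  rw [Walk.length_append] at h3
  rw [← tree_path_dist hG hP, ← h1, ← h2, h3]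

lemma gate_cons (hG : G.IsTree) {w y a : V} (h : G.Adj w y)
    (hd : G.dist w a = G.dist y a + 1) :
    ∃ q : G.Walk y a, (Walk.cons h q).IsPath ∧ q.length = G.dist y a := by
  obtain ⟨q, hq⟩ := hG.isConnected.exists_walk_length_eq_dist y a
  have hqp : q.IsPath := q.isPath_of_length_eq_dist hq
  refine ⟨q, (Walk.cons_isPath_iff h q).mpr ⟨hqp, fun hw => ?_⟩, hq⟩
  have := tree_support_dist hG hqp hw
  omega

lemma dist_of_cons_path (hG : G.IsTree) {w y a : V} {h : G.Adj w y} {q : G.Walk y a}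
    (hp : (Walk.cons h q).IsPath) : G.dist w a = G.dist y a + 1 := by
  have h1 := tree_path_dist hG hp
  have h2 := tree_path_dist hG ((Walk.cons_isPath_iff h q).mp hp).1
  simp only [Walk.length_cons] at h1
  omega

lemma gate_unique (hG : G.IsTree) {w y y' a : V} (h1 : G.Adj w y) (h2 : G.Adj w y')
    (hd1 : G.dist w a = G.dist y a + 1) (hd2 : G.dist w a = G.dist y' a + 1) :
    y = y' := by
  obtain ⟨q1, hq1, -⟩ := gate_cons hG h1 hd1
  obtain ⟨q2, hq2, -⟩ := gate_cons hG h2 hd2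
  have heq := tree_path_unique hG hq1 hq2
  have e1 : (Walk.cons h1 q1).getVert 1 = y := (Walk.getVert_cons_succ (n := 0) q1 h1).trans (Walk.getVert_zero q1)
  have e2 : (Walk.cons h2 q2).getVert 1 = y' := (Walk.getVert_cons_succ (n := 0) q2 h2).trans (Walk.getVert_zero q2)
  rw [← e1, ← e2, heq]

lemma isPath_concat {u v b : V} {p : G.Walk u v} (hp : p.IsPath) (h : G.Adj v b)
    (hb : b ∉ p.support) : (p.concat h).IsPath := by
  rw [← Walk.isPath_reverse_iff, Walk.reverse_concat, Walk.cons_isPath_iff]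
  refine ⟨(Walk.isPath_reverse_iff p).mpr hp, ?_⟩
  simpa [Walk.support_reverse] using hb

lemma gate_step (hG : G.IsTree) {w y a b : V} (h1 : G.Adj w y)
    (hd1 : G.dist w a = G.dist y a + 1) (hab : G.Adj a b)
    (hle : G.dist w a ≤ G.dist w b) : G.dist w b = G.dist y b + 1 := by
  obtain ⟨q, hq, hql⟩ := gate_cons hG h1 hd1
  have hbs : b ∉ (Walk.cons h1 q).support := by
    intro hb
    have hsum := tree_support_dist hG hq hb
    have hba : G.dist b a = 1 := SimpleGraph.dist_eq_one_iff_adj.mpr hab.symm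
    omega
  have hcp : ((Walk.cons h1 q).concat hab).IsPath := isPath_concat hq hab hbs
  rw [Walk.concat_cons] at hcp
  exact dist_of_cons_path hG hcp

lemma gate_extend (hG : G.IsTree) {w y c z : V} (hwy : G.Adj w y) (hyc : G.Adj y c)
    (hcw : c ≠ w) (hd : G.dist y z = G.dist c z + 1) :
    G.dist w z = G.dist y z + 1 := by
  obtain ⟨q, hq, -⟩ := gate_cons hG hyc hd
  have hws : w ∉ (Walk.cons hyc q).support := by
    intro hw
    have hsum := tree_support_dist hG hq hw
    have h1 : G.dist y w = 1 := SimpleGraph.dist_eq_one_iff_adj.mpr hwy.symm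
    have := gate_unique hG hwy.symm hyc (by omega : G.dist y z = G.dist w z + 1) hd
    exact hcw this.symm
  exact dist_of_cons_path hG ((Walk.cons_isPath_iff hwy (Walk.cons hyc q)).mpr ⟨hq, hws⟩)

lemma gate_exists (hG : G.IsTree) {u z : V} (h0 : G.dist u z ≠ 0) :
    ∃ y, G.Adj u y ∧ G.dist u z = G.dist y z + 1 := by
  obtain ⟨p, hp⟩ := SimpleGraph.exists_walk_of_dist_ne_zero h0
  have hpath : p.IsPath := p.isPath_of_length_eq_dist hp
  cases p with
  | nil => simp at h0
  | cons h q => exact ⟨_, h, dist_of_cons_path hG hpath⟩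

end TreeLemmas

/-- The set of vertices whose unique path from `w` starts with the neighbor `y`,
within distance `r` of `y`. -/
def Sdir {V : Type} (G : SimpleGraph V) (w y : V) (r : ℕ) : Set V :=
  {z | G.dist y z ≤ r ∧ G.dist w z = G.dist y z + 1}

section SdirLemmas
variable {V : Type} [DecidableEq V] [Fintype V] {G : SimpleGraph V} [DecidableRel G.Adj]

lemma Sdir_self (hwy : G.Adj w y) {r : ℕ} : y ∈ Sdir G w y r := by
  simp only [Sdir, Set.mem_setOf_eq, SimpleGraph.dist_self]
  simp [SimpleGraph.dist_eq_one_iff_adj.mpr hwy]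

lemma Sdir_center_not_mem {w y : V} {r : ℕ} : w ∉ Sdir G w y r := by
  simp only [Sdir, Set.mem_setOf_eq, SimpleGraph.dist_self]
  omega

lemma Sdir_disjoint (hG : G.IsTree) {w y y' z : V} {r r' : ℕ} (hwy : G.Adj w y)
    (hwy' : G.Adj w y') (h : z ∈ Sdir G w y r) (h' : z ∈ Sdir G w y' r') : y = y' :=
  gate_unique hG hwy hwy' h.2 h'.2

lemma Sdir_decomp (hG : G.IsTree) {w y : V} (hwy : G.Adj w y) (r : ℕ) :
    Sdir G w y (r+1) = insert y (⋃ c ∈ (G.neighborFinset y).erase w, Sdir G y c r) := by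
  ext z
  simp only [Sdir, Set.mem_setOf_eq, Set.mem_insert_iff, Set.mem_iUnion, Finset.mem_erase,
    SimpleGraph.mem_neighborFinset, exists_prop]
  constructor
  · rintro ⟨hzr, hz⟩
    by_cases hzy : z = y
    · exact Or.inl hzy
    · have h0 : G.dist y z ≠ 0 := fun h => hzy (conn_dist_zero hG.isConnected h).symm
      obtain ⟨c, hyc, hc⟩ := gate_exists hG h0
      have hcw : c ≠ w := by
        rintro rfl
        omega
      exact Or.inr ⟨c, ⟨hcw, hyc⟩, by omega, hc⟩
  · rintro (rfl | ⟨c, ⟨hcw, hyc⟩, hcz, hyz⟩)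
    · exact Sdir_self hwy
    · have := gate_extend hG hwy hyc hcw hyz
      exact ⟨by omega, this⟩

lemma ball_decomp (hG : G.IsTree) (u : V) (r : ℕ) :
    {z : V | G.dist u z ≤ r + 1} = insert u (⋃ y ∈ G.neighborFinset u, Sdir G u y r) := by
  ext z
  simp only [Sdir, Set.mem_setOf_eq, Set.mem_insert_iff, Set.mem_iUnion,
    SimpleGraph.mem_neighborFinset, exists_prop]
  constructor
  · intro hz
    by_cases hzu : z = u
    · exact Or.inl hzu
    · have h0 : G.dist u z ≠ 0 := fun h => hzu (conn_dist_zero hG.isConnected h).symm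
      obtain ⟨y, huy, hy⟩ := gate_exists hG h0
      exact Or.inr ⟨y, huy, by omega, hy⟩
  · rintro (rfl | ⟨y, huy, hyz, huz⟩)
    · rw [SimpleGraph.dist_self]; omega
    · omega

lemma ball_zero (hG : G.IsTree) (u : V) : {z : V | G.dist u z ≤ 0} = {u} := by
  ext z
  simp only [Set.mem_setOf_eq, Nat.le_zero, Set.mem_singleton_iff]
  constructor
  · intro h
    exact (conn_dist_zero hG.isConnected h).symm
  · rintro rfl
    simp

lemma Sdir_zero (hG : G.IsTree) {w y : V} (hwy : G.Adj w y) : Sdir G w y 0 = {y} := by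
  ext z
  simp only [Sdir, Set.mem_setOf_eq, Set.mem_singleton_iff]
  constructor
  · rintro ⟨h0, -⟩
    exact (conn_dist_zero hG.isConnected (Nat.le_zero.mp h0)).symm
  · rintro rfl
    exact Sdir_self hwy

lemma Sdir_adj_center (hG : G.IsTree) {w y z : V} {r : ℕ} (hwy : G.Adj w y)
    (hz : z ∈ Sdir G w y r) : G.Adj w z ↔ z = y := by
  constructor
  · intro h
    have h1 : G.dist w z = 1 := SimpleGraph.dist_eq_one_iff_adj.mpr h
    have h0 : G.dist y z = 0 := by have := hz.2; omega
    exact (conn_dist_zero hG.isConnected h0).symm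
  · rintro rfl
    exact hwy

lemma Sdir_cross_not_adj (hG : G.IsTree) {w y y' a b : V} {r r' : ℕ} (hwy : G.Adj w y)
    (hwy' : G.Adj w y') (hyy' : y ≠ y') (ha : a ∈ Sdir G w y r) (hb : b ∈ Sdir G w y' r') :
    ¬ G.Adj a b := by
  intro hab
  rcases le_total (G.dist w a) (G.dist w b) with h | h
  · exact hyy' (gate_unique hG hwy hwy' (gate_step hG hwy ha.2 hab h) hb.2)
  · exact hyy' (gate_unique hG hwy hwy' ha.2 (gate_step hG hwy' hb.2 hab.symm h))

end SdirLemmas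

lemma multiset_pair {α β γ : Type*} [Nonempty β] (f : α → γ) (g : β → γ)
    {s : Multiset α} {t : Multiset β} (h : Multiset.Rel (fun a b => f a = g b) s t) :
    s.Nodup → t.Nodup →
    ∃ e : α → β, Set.BijOn e {a | a ∈ s} {b | b ∈ t} ∧ ∀ a ∈ s, g (e a) = f a := by
  induction h with
  | zero =>
    intro _ _
    refine ⟨fun _ => Classical.arbitrary β, ?_, by simp⟩
    have : ({a | a ∈ (0 : Multiset α)} : Set α) = ∅ := by simp
    have h2 : ({b | b ∈ (0 : Multiset β)} : Set β) = ∅ := by simp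
    rw [this, h2]
    exact Set.bijOn_empty _
  | @cons a b as bs hab hrel ih =>
    intro hs ht
    rw [Multiset.nodup_cons] at hs ht
    obtain ⟨e', he', hg⟩ := ih hs.2 ht.2
    classical
    have heq : Set.EqOn (Function.update e' a b) e' {x | x ∈ as} := by
      intro x hx
      exact Function.update_of_ne (fun hxa => hs.1 (by rwa [hxa] at hx)) _ _
    have hbij : Set.BijOn (Function.update e' a b) {x | x ∈ as} {x | x ∈ bs} :=
      he'.congr heq.symm
    have hbni : Function.update e' a b a ∉ {x | x ∈ bs} := by
      simp only [Function.update_self]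
      exact ht.1
    have := hbij.insert hbni
    rw [Function.update_self] at this
    refine ⟨Function.update e' a b, ?_, ?_⟩
    · have h1 : ({x | x ∈ a ::ₘ as} : Set α) = insert a {x | x ∈ as} := by
        ext x; simp [Multiset.mem_cons]
      have h2 : ({x | x ∈ b ::ₘ bs} : Set β) = insert b {x | x ∈ bs} := by
        ext x; simp [Multiset.mem_cons]
      rw [h1, h2]
      exact this
    · intro x hx
      rcases Multiset.mem_cons.mp hx with rfl | hx
      · rw [Function.update_self]; exact hab.symm
      · rw [heq hx]; exact hg x hx

/-- `f` is an isomorphism of pointed labeled induced subgraphs from `(A, y)` to `(B, z)`. -/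
def Good {V W L : Type} (G : SimpleGraph V) (H : SimpleGraph W)
    (labG : V → L) (labH : W → L) (A : Set V) (B : Set W) (y : V) (z : W) (f : V → W) : Prop :=
  Set.BijOn f A B ∧ f y = z ∧ (∀ a ∈ A, labH (f a) = labG a) ∧
    ∀ a ∈ A, ∀ b ∈ A, (G.Adj a b ↔ H.Adj (f a) (f b))

lemma glue {V W L : Type} [Fintype V] [Fintype W]
    {G : SimpleGraph V} {H : SimpleGraph W} [DecidableRel G.Adj] [DecidableRel H.Adj]
    {labG : V → L} {labH : W → L}
    (hG : G.IsTree) (hH : H.IsTree) (r : ℕ) (y : V) (z : W)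
    (s : Finset V) (t : Finset W)
    (hs : s ⊆ G.neighborFinset y) (ht : t ⊆ H.neighborFinset z)
    (e : V → W) (he : Set.BijOn e ↑s ↑t)
    (hlab : labG y = labH z)
    (F : V → V → W)
    (hF : ∀ c ∈ s, Good G H labG labH (Sdir G y c r) (Sdir H z (e c) r) c (e c) (F c)) :
    ∃ f, Good G H labG labH (insert y (⋃ c ∈ s, Sdir G y c r))
      (insert z (⋃ d ∈ t, Sdir H z d r)) y z f := by
  classical
  have hadjG : ∀ c ∈ s, G.Adj y c := fun c hc => by simpa using hs hc
  have hadjH : ∀ d ∈ t, H.Adj z d := fun d hd => by simpa using ht hd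
  have het : ∀ c ∈ s, e c ∈ t := fun c hc => by
    simpa using he.mapsTo (by simpa using hc)
  have heinj : ∀ c ∈ s, ∀ c' ∈ s, e c = e c' → c = c' := fun c hc c' hc' h =>
    he.injOn (by simpa using hc) (by simpa using hc') h
  set A : Set V := insert y (⋃ c ∈ s, Sdir G y c r) with hA
  set B : Set W := insert z (⋃ d ∈ t, Sdir H z d r) with hB
  set f : V → W := fun a =>
    if h : ∃ c, c ∈ s ∧ a ∈ Sdir G y c r then F h.choose a else z with hf
  have hfc : ∀ c ∈ s, ∀ a ∈ Sdir G y c r, f a = F c a := by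
    intro c hc a ha
    have hex : ∃ c', c' ∈ s ∧ a ∈ Sdir G y c' r := ⟨c, hc, ha⟩
    rw [hf]
    simp only [dif_pos hex]
    obtain ⟨hc', ha'⟩ := hex.choose_spec
    rw [Sdir_disjoint hG (hadjG _ hc') (hadjG c hc) ha' ha]
  have hfy : f y = z := by
    have hno : ¬∃ c, c ∈ s ∧ y ∈ Sdir G y c r := by
      rintro ⟨c, hc, hy⟩
      exact Sdir_center_not_mem hy
    rw [hf]
    exact dif_neg hno
  have hyA : y ∈ A := Set.mem_insert _ _
  have hzB : z ∈ B := Set.mem_insert _ _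
  have hmemA : ∀ a ∈ A, a = y ∨ ∃ c, c ∈ s ∧ a ∈ Sdir G y c r := by
    intro a ha
    rcases Set.mem_insert_iff.mp ha with h | h
    · exact Or.inl h
    · exact Or.inr (by simpa using Set.mem_iUnion₂.mp h)
  have hmemB : ∀ b ∈ B, b = z ∨ ∃ d, d ∈ t ∧ b ∈ Sdir H z d r := by
    intro b hb
    rcases Set.mem_insert_iff.mp hb with h | h
    · exact Or.inl h
    · exact Or.inr (by simpa using Set.mem_iUnion₂.mp h)
  have hSdirA : ∀ c ∈ s, Sdir G y c r ⊆ A := fun c hc a ha =>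
    Set.mem_insert_of_mem _ (Set.mem_iUnion₂.mpr ⟨c, hc, ha⟩)
  have hSdirB : ∀ c ∈ s, Sdir H z (e c) r ⊆ B := fun c hc b hb =>
    Set.mem_insert_of_mem _ (Set.mem_iUnion₂.mpr ⟨e c, het c hc, hb⟩)
  -- the key pointwise adjacency equivalence at the center
  have hkey : ∀ c ∈ s, ∀ b ∈ Sdir G y c r, (G.Adj y b ↔ H.Adj z (f b)) := by
    intro c hc b hm
    rw [hfc c hc b hm]
    have h1 : G.Adj y b ↔ b = c := Sdir_adj_center hG (hadjG c hc) hm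
    have h2 : H.Adj z (F c b) ↔ F c b = e c :=
      Sdir_adj_center hH (hadjH _ (het c hc)) ((hF c hc).1.mapsTo hm)
    have h3 : F c b = e c ↔ b = c := by
      constructor
      · intro h
        exact (hF c hc).1.injOn hm (Sdir_self (hadjG c hc)) (by rw [h, (hF c hc).2.1])
      · rintro rfl
        exact (hF _ hc).2.1
    rw [h1, h2, h3]
  refine ⟨f, ⟨?_, ?_, ?_⟩, hfy, ?_, ?_⟩
  · -- MapsTo
    intro a ha
    rcases hmemA a ha with rfl | ⟨c, hc, hm⟩
    · rw [hfy]; exact hzB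
    · rw [hfc c hc a hm]
      exact hSdirB c hc ((hF c hc).1.mapsTo hm)
  · -- InjOn
    intro a ha a' ha' hfa
    rcases hmemA a ha with rfl | ⟨c, hc, hm⟩ <;> rcases hmemA a' ha' with h' | ⟨c', hc', hm'⟩
    · exact h'.symm
    · exfalso
      rw [hfy, hfc c' hc' a' hm'] at hfa
      exact Sdir_center_not_mem (hfa ▸ (hF c' hc').1.mapsTo hm')
    · exfalso
      subst h'
      rw [hfy, hfc c hc a hm] at hfa
      exact Sdir_center_not_mem (hfa ▸ (hF c hc).1.mapsTo hm)
    · rw [hfc c hc a hm, hfc c' hc' a' hm'] at hfa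
      have hcc : c = c' := by
        have h1 := (hF c hc).1.mapsTo hm
        have h2 := (hF c' hc').1.mapsTo hm'
        rw [hfa] at h1
        exact heinj c hc c' hc'
          (Sdir_disjoint hH (hadjH _ (het c hc)) (hadjH _ (het c' hc')) h1 h2)
      subst hcc
      exact (hF c hc).1.injOn hm hm' hfa
  · -- SurjOn
    intro b hb
    rcases hmemB b hb with rfl | ⟨d, hd, hm⟩
    · exact ⟨y, hyA, hfy⟩
    · obtain ⟨c, hcs, rfl⟩ := he.surjOn (by simpa using hd)
      have hcs' : c ∈ s := by simpa using hcs
      obtain ⟨a, ham, hfa⟩ := (hF c hcs').1.surjOn hm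
      exact ⟨a, hSdirA c hcs' ham, by rw [hfc c hcs' a ham]; exact hfa⟩
  · -- labels
    intro a ha
    rcases hmemA a ha with rfl | ⟨c, hc, hm⟩
    · rw [hfy]; exact hlab.symm
    · rw [hfc c hc a hm]
      exact (hF c hc).2.2.1 a hm
  · -- adjacency
    intro a ha b hb
    rcases hmemA a ha with rfl | ⟨c, hc, hm⟩ <;> rcases hmemA b hb with h' | ⟨c', hc', hm'⟩
    · subst h'
      rw [hfy]
      simp
    · rw [hfy]
      exact hkey c' hc' b hm'
    · subst h'
      rw [hfy, G.adj_comm, H.adj_comm]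
      exact hkey c hc a hm
    · by_cases hcc : c = c'
      · subst hcc
        rw [hfc c hc a hm, hfc c hc b hm']
        exact (hF c hc).2.2.2 a hm b hm'
      · have hne : e c ≠ e c' := fun h => hcc (heinj c hc c' hc' h)
        rw [hfc c hc a hm, hfc c' hc' b hm']
        exact iff_of_false
          (Sdir_cross_not_adj hG (hadjG c hc) (hadjG c' hc') hcc hm hm')
          (Sdir_cross_not_adj hH (hadjH _ (het c hc)) (hadjH _ (het c' hc')) hne
            ((hF c hc).1.mapsTo hm) ((hF c' hc').1.mapsTo hm'))

lemma Dlem {V W L : Type} [Fintype V] [Fintype W]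
    (G : SimpleGraph V) (H : SimpleGraph W) [DecidableRel G.Adj] [DecidableRel H.Adj]
    (labG : V → L) (labH : W → L) (hG : G.IsTree) (hH : H.IsTree) :
    ∀ (r : ℕ) (w y : V) (x z : W), G.Adj w y → H.Adj x z →
      crIter G labG r y = crIter H labH r z →
      crIter G labG r w = crIter H labH r x →
      ∃ f, Good G H labG labH (Sdir G w y r) (Sdir H x z r) y z f := by
  classical
  intro r
  induction r with
  | zero =>
    intro w y x z hwy hxz hyz _
    refine ⟨fun _ => z, ?_⟩
    rw [Sdir_zero hG hwy, Sdir_zero hH hxz]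
    refine ⟨Set.bijOn_singleton.mpr rfl, rfl, ?_, ?_⟩
    · intro a ha
      rw [Set.mem_singleton_iff] at ha
      subst ha
      exact (crLab G H labG labH hyz).symm
    · intro a ha b hb
      rw [Set.mem_singleton_iff] at ha hb
      subst ha; subst hb
      simp
  | succ r ih =>
    intro w y x z hwy hxz hyz hwx
    have hnbr := crNbr G H labG labH hyz
    have hwmem : w ∈ (G.neighborFinset y).val := by
      rw [Finset.mem_val]; simpa using hwy.symm
    have hxmem : x ∈ (H.neighborFinset z).val := by
      rw [Finset.mem_val]; simpa using hxz.symm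
    have hpw := crProj G H labG labH hwx
    set s : Finset V := (G.neighborFinset y).erase w with hsdef
    set t : Finset W := (H.neighborFinset z).erase x with htdef
    have herase : s.val.map (crIter G labG r) = t.val.map (crIter H labH r) := by
      rw [← Multiset.cons_erase hwmem, ← Multiset.cons_erase hxmem,
        Multiset.map_cons, Multiset.map_cons, hpw] at hnbr
      have h2 := (Multiset.cons_inj_right _).mp hnbr
      rwa [hsdef, htdef, Finset.erase_val, Finset.erase_val]
    have hrel := Multiset.rel_map.mp (Multiset.rel_eq.mpr herase)
    haveI : Nonempty W := ⟨z⟩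
    obtain ⟨e, he, hcol⟩ := multiset_pair _ _ hrel s.nodup t.nodup
    have hsval : ({a | a ∈ s.val} : Set V) = ↑s := by ext a; simp
    have htval : ({b | b ∈ t.val} : Set W) = ↑t := by ext b; simp
    rw [hsval, htval] at he
    have hssub : s ⊆ G.neighborFinset y := Finset.erase_subset _ _
    have htsub : t ⊆ H.neighborFinset z := Finset.erase_subset _ _
    have hIH : ∀ c ∈ s, ∃ f, Good G H labG labH (Sdir G y c r) (Sdir H z (e c) r) c (e c) f := by
      intro c hc
      have hyc : G.Adj y c := by simpa using hssub hc
      have hec : e c ∈ t := by simpa using he.mapsTo (by simpa using hc)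
      have hzc : H.Adj z (e c) := by simpa using htsub hec
      exact ih y c z (e c) hyc hzc (hcol c (Finset.mem_val.mpr hc)).symm
        (crProj G H labG labH hyz)
    choose Fdep hFdep using hIH
    set F : V → V → W := fun c => if hc : c ∈ s then Fdep c hc else fun _ => z with hFdef
    have hF : ∀ c ∈ s, Good G H labG labH (Sdir G y c r) (Sdir H z (e c) r) c (e c) (F c) := by
      intro c hc
      rw [hFdef]
      simp only [dif_pos hc]
      exact hFdep c hc
    obtain ⟨f, hf⟩ := glue hG hH r y z s t hssub htsub e he
      (crLab G H labG labH hyz) F hF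
    rw [Sdir_decomp hG hwy r, Sdir_decomp hH hxz r]
    exact ⟨f, hf⟩

lemma ball_good {V W L : Type} [Fintype V] [Fintype W]
    (G : SimpleGraph V) (H : SimpleGraph W) [DecidableRel G.Adj] [DecidableRel H.Adj]
    (labG : V → L) (labH : W → L) (hG : G.IsTree) (hH : H.IsTree) (u : V) (v : W) (r : ℕ)
    (hcr : crIter G labG r u = crIter H labH r v) :
    ∃ f, Good G H labG labH {w : V | G.dist u w ≤ r} {w : W | H.dist v w ≤ r} u v f := by
  classical
  cases r with
  | zero =>
    refine ⟨fun _ => v, ?_⟩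
    rw [ball_zero hG, ball_zero hH]
    refine ⟨Set.bijOn_singleton.mpr rfl, rfl, ?_, ?_⟩
    · intro a ha
      rw [Set.mem_singleton_iff] at ha
      subst ha
      exact (crLab G H labG labH hcr).symm
    · intro a ha b hb
      rw [Set.mem_singleton_iff] at ha hb
      subst ha; subst hb
      simp
  | succ r =>
    have hnbr := crNbr G H labG labH hcr
    set s : Finset V := G.neighborFinset u with hsdef
    set t : Finset W := H.neighborFinset v with htdef
    have hrel := Multiset.rel_map.mp (Multiset.rel_eq.mpr hnbr)
    haveI : Nonempty W := ⟨v⟩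
    obtain ⟨e, he, hcol⟩ := multiset_pair _ _ hrel s.nodup t.nodup
    have hsval : ({a | a ∈ s.val} : Set V) = ↑s := by ext a; simp
    have htval : ({b | b ∈ t.val} : Set W) = ↑t := by ext b; simp
    rw [hsval, htval] at he
    have hIH : ∀ c ∈ s, ∃ f, Good G H labG labH (Sdir G u c r) (Sdir H v (e c) r) c (e c) f := by
      intro c hc
      have hyc : G.Adj u c := by simpa [hsdef] using hc
      have hec : e c ∈ t := by simpa using he.mapsTo (by simpa using hc)
      have hzc : H.Adj v (e c) := by simpa [htdef] using hec
      exact Dlem G H labG labH hG hH r u c v (e c) hyc hzc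
        (hcol c (Finset.mem_val.mpr hc)).symm (crProj G H labG labH hcr)
    choose Fdep hFdep using hIH
    set F : V → V → W := fun c => if hc : c ∈ s then Fdep c hc else fun _ => v with hFdef
    have hF : ∀ c ∈ s, Good G H labG labH (Sdir G u c r) (Sdir H v (e c) r) c (e c) (F c) := by
      intro c hc
      rw [hFdef]
      simp only [dif_pos hc]
      exact hFdep c hc
    obtain ⟨f, hf⟩ := glue hG hH r u v s t (le_refl s) (le_refl t) e he
      (crLab G H labG labH hcr) F hF
    rw [ball_decomp hG u r, ball_decomp hH v r]
    exact ⟨f, hf⟩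

theorem tree_cr_eq_implies_ball_iso' {V W L : Type} [Fintype V] [Fintype W]
    (G : SimpleGraph V) (H : SimpleGraph W) [DecidableRel G.Adj] [DecidableRel H.Adj]
    (labG : V → L) (labH : W → L)
    (hG : G.IsTree) (hH : H.IsTree) (u : V) (v : W) (r : ℕ)
    (hcr : crIter G labG r u = crIter H labH r v) :
    ∃ φ : (G.induce {w : V | G.dist u w ≤ r}) ≃g (H.induce {w : W | H.dist v w ≤ r}),
      φ ⟨u, by simp [SimpleGraph.dist_self]⟩ = ⟨v, by simp [SimpleGraph.dist_self]⟩ ∧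
      ∀ w : {w : V | G.dist u w ≤ r}, labH (φ w).val = labG w.val := by
  obtain ⟨f, hbij, hfu, hlabp, hadj⟩ := ball_good G H labG labH hG hH u v r hcr
  refine ⟨⟨Set.BijOn.equiv f hbij, ?_⟩, ?_, ?_⟩
  · intro a b
    simp only [SimpleGraph.comap_adj, Function.Embedding.coe_subtype]
    exact (hadj a a.2 b b.2).symm
  · exact Subtype.ext hfu
  · intro w
    exact hlabp w w.2

/-- If two nodes of pointed finite labeled trees get the same color after `r` rounds of
color refinement (from the labeling-based initial coloring), then the radius-`r`
neighborhoods of the two distinguished nodes are isomorphic as pointed labeled graphs. -/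
theorem tree_cr_eq_implies_ball_iso {V W L : Type} [Fintype V] [Fintype W]
    (G : SimpleGraph V) (H : SimpleGraph W) [DecidableRel G.Adj] [DecidableRel H.Adj]
    (labG : V → L) (labH : W → L)
    (hG : G.IsTree) (hH : H.IsTree) (u : V) (v : W) (r : ℕ)
    (hcr : crIter G labG r u = crIter H labH r v) :
    ∃ φ : (G.induce {w : V | G.dist u w ≤ r}) ≃g (H.induce {w : W | H.dist v w ≤ r}),
      φ ⟨u, by simp [SimpleGraph.dist_self]⟩ = ⟨v, by simp [SimpleGraph.dist_self]⟩ ∧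
      ∀ w : {w : V | G.dist u w ≤ r}, labH (φ w).val = labG w.val := by
  exact tree_cr_eq_implies_ball_iso' G H labG labH hG hH u v r hcr
end

section
/- If a node query Q and its complement Qᶜ are both closed under inverse functional bisimulations (i.e., whenever there is a functional bisimulation from K^w to G^u and G^u ∈ Q then K^w ∈ Q, and likewise for Qᶜ), then Q is closed under arbitrary bisimulations. -/
/-- `B` is a bisimulation between the labeled graphs `(G, labG)` and `(H, labH)`:
related nodes have equal labels and satisfy the back-and-forth conditions. -/
def IsBisim {V W L : Type} (G : SimpleGraph V) (labG : V → L)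
    (H : SimpleGraph W) (labH : W → L) (B : V → W → Prop) : Prop :=
  ∀ a b, B a b → labG a = labH b ∧
    (∀ a', G.Adj a a' → ∃ b', H.Adj b b' ∧ B a' b') ∧
    (∀ b', H.Adj b b' → ∃ a', G.Adj a a' ∧ B a' b')

/-- If a node query `Q` (an isomorphism-closed class of pointed finite labeled graphs)
and its complement are both closed under inverse functional bisimulations, then `Q` is
closed under arbitrary bisimulations. -/
theorem bisim_closed_of_functional_bisim_closed {L : Type}
    (Q : ∀ (V : Type) [Fintype V], SimpleGraph V → (V → L) → V → Prop)
    (hiso : ∀ (V W : Type) [Fintype V] [Fintype W] (G : SimpleGraph V)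
      (H : SimpleGraph W) (labG : V → L) (labH : W → L) (u : V) (φ : G ≃g H),
      (∀ x : V, labH (φ x) = labG x) → (Q V G labG u ↔ Q W H labH (φ u)))
    (hQ : ∀ (V W : Type) [Fintype V] [Fintype W] (G : SimpleGraph V) (labG : V → L)
      (H : SimpleGraph W) (labH : W → L) (u : V) (v : W) (h : V → W),
      h u = v → IsBisim G labG H labH (fun a b => h a = b) →
      Q W H labH v → Q V G labG u)
    (hQc : ∀ (V W : Type) [Fintype V] [Fintype W] (G : SimpleGraph V) (labG : V → L)
      (H : SimpleGraph W) (labH : W → L) (u : V) (v : W) (h : V → W),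
      h u = v → IsBisim G labG H labH (fun a b => h a = b) →
      ¬ Q W H labH v → ¬ Q V G labG u) :
    ∀ (V W : Type) [Fintype V] [Fintype W] (G : SimpleGraph V) (labG : V → L)
      (H : SimpleGraph W) (labH : W → L) (u : V) (v : W) (B : V → W → Prop),
      B u v → IsBisim G labG H labH B → Q V G labG u → Q W H labH v := by
  intro V W _ _ G labG H labH u v B huv hB hQu
  classical
  -- the bisimulation product
  let S := {p : V × W // B p.1 p.2}
  let P : SimpleGraph S :=
    { Adj := fun p q => G.Adj p.1.1 q.1.1 ∧ H.Adj p.1.2 q.1.2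
      symm := ⟨fun p q h => ⟨h.1.symm, h.2.symm⟩⟩
      loopless := ⟨fun p h => G.irrefl h.1⟩ }
  let lab : S → L := fun p => labG p.1.1
  let pt : S := ⟨(u, v), huv⟩
  -- first projection is a functional bisimulation P → G
  have hπ1 : IsBisim P lab G labG (fun a b => a.1.1 = b) := by
    intro a b hab
    refine ⟨by simp [lab, hab], ?_, ?_⟩
    · intro a' ha'
      exact ⟨a'.1.1, hab ▸ ha'.1, rfl⟩
    · intro b' hb'
      obtain ⟨w', hw', hBw⟩ := (hB a.1.1 a.1.2 a.2).2.1 b' (hab ▸ hb')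
      exact ⟨⟨(b', w'), hBw⟩, ⟨hab ▸ hb', hw'⟩, rfl⟩
  -- second projection is a functional bisimulation P → H
  have hπ2 : IsBisim P lab H labH (fun a b => a.1.2 = b) := by
    intro a b hab
    refine ⟨by simpa [lab, hab] using (hB a.1.1 a.1.2 a.2).1, ?_, ?_⟩
    · intro a' ha'
      exact ⟨a'.1.2, hab ▸ ha'.2, rfl⟩
    · intro b' hb'
      obtain ⟨w', hw', hBw⟩ := (hB a.1.1 a.1.2 a.2).2.2 b' (hab ▸ hb')
      exact ⟨⟨(w', b'), hBw⟩, ⟨hw', hab ▸ hb'⟩, rfl⟩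
  have hP : Q S P lab pt :=
    hQ S V P lab G labG pt u (fun a => a.1.1) rfl hπ1 hQu
  by_contra hv
  exact hQc S W P lab H labH pt v (fun a => a.1.2) rfl hπ2 hv hP
end

section
/- Let G^u and H^v be pointed labeled graphs and suppose G^u is acyclic (a tree) while H^v contains a cycle. Then G^u and H^v are not color-refinement equivalent: there exists r such that the colors of u and v after r rounds of color refinement differ. Equivalently, for sufficiently large L the depth-L unravellings of G^u and H^v are non-isomorphic. -/
open Finset

private lemma connected_card_le_edges {W : Type} [Fintype W] (H : SimpleGraph W)
    [Fintype H.edgeSet] (hH : H.Connected) :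
    Fintype.card W ≤ H.edgeFinset.card + 1 := by
  classical
  obtain ⟨v0⟩ := hH.nonempty
  have parent : ∀ w : W, w ≠ v0 → ∃ w', H.Adj w w' ∧ H.dist w' v0 + 1 = H.dist w v0 := by
    intro w hw
    have hd : 0 < H.dist w v0 := hH.pos_dist_of_ne hw
    obtain ⟨p, hp⟩ := (hH w v0).exists_walk_length_eq_dist
    cases p with
    | nil => simp at hd
    | @cons _ w' _ h q =>
      refine ⟨w', h, ?_⟩
      have h1 : H.dist w' v0 ≤ q.length := SimpleGraph.dist_le q
      have h2 : H.dist w v0 ≤ H.dist w w' + H.dist w' v0 := hH.dist_triangle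
      have h3 : H.dist w w' = 1 := SimpleGraph.dist_eq_one_iff_adj.2 h
      simp only [SimpleGraph.Walk.length_cons] at hp
      omega
  choose pf hpf1 hpf2 using parent
  have hcard : (univ.erase v0).card ≤ H.edgeFinset.card := by
    apply Finset.card_le_card_of_injOn
      (fun w => if h : w = v0 then s(v0, v0) else s(w, pf w h))
    · intro w hw
      have hwne : w ≠ v0 := (Finset.mem_erase.1 hw).1
      simp only [dif_neg hwne]
      exact SimpleGraph.mem_edgeFinset.2 (hpf1 w hwne)
    · intro w1 hw1 w2 hw2 heq
      have h1 : w1 ≠ v0 := (Finset.mem_erase.1 (Finset.mem_coe.1 hw1)).1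
      have h2 : w2 ≠ v0 := (Finset.mem_erase.1 (Finset.mem_coe.1 hw2)).1
      simp only [dif_neg h1, dif_neg h2, Sym2.eq_iff] at heq
      rcases heq with ⟨he, _⟩ | ⟨ha, hb⟩
      · exact he
      · exfalso
        have e1 := hpf2 w1 h1
        have e2 := hpf2 w2 h2
        rw [hb] at e1
        rw [← ha] at e2
        omega
  have : (univ.erase v0).card = Fintype.card W - 1 := by
    rw [Finset.card_erase_of_mem (mem_univ v0), Finset.card_univ]
  have hpos : 0 < Fintype.card W := Fintype.card_pos_iff.2 ⟨v0⟩
  omega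

private lemma cyclic_card_le_edges {W : Type} [Fintype W] (H : SimpleGraph W)
    [Fintype H.edgeSet] (hH : H.Connected) (hc : ¬ H.IsAcyclic) :
    Fintype.card W ≤ H.edgeFinset.card := by
  classical
  rw [SimpleGraph.isAcyclic_iff_forall_edge_isBridge] at hc
  push_neg at hc
  obtain ⟨e, he, hbr⟩ := hc
  induction e with
  | _ x y =>
  have hadj : H.Adj x y := he
  rw [SimpleGraph.isBridge_iff] at hbr
  have hre : (H \ SimpleGraph.fromEdgeSet {s(x, y)}).Reachable x y := by
    by_contra hnr
    exact hbr hnr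
  set H' := H \ SimpleGraph.fromEdgeSet {s(x, y)} with hH'
  have hkey : ∀ {a b : W}, H.Walk a b → H'.Reachable a b := by
    intro a b p
    induction p with
    | nil => exact SimpleGraph.Reachable.refl _
    | @cons a c b h q ih =>
      refine SimpleGraph.Reachable.trans ?_ ih
      by_cases hc' : s(a, c) = s(x, y)
      · rw [Sym2.eq_iff] at hc'
        rcases hc' with ⟨rfl, rfl⟩ | ⟨rfl, rfl⟩
        · exact hre
        · exact hre.symm
      · refine SimpleGraph.Adj.reachable ?_
        rw [hH', SimpleGraph.sdiff_adj, SimpleGraph.fromEdgeSet_adj]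
        exact ⟨h, fun hh => hc' hh.1⟩
  haveI : Nonempty W := hH.nonempty
  have hconn' : H'.Connected := by
    refine ⟨fun a b => ?_⟩
    obtain ⟨p⟩ := hH a b
    exact hkey p
  haveI : Fintype H'.edgeSet := Fintype.ofFinite _
  have hsub : H'.edgeFinset ⊆ H.edgeFinset.erase s(x, y) := by
    intro e' he'
    rw [SimpleGraph.mem_edgeFinset] at he'
    induction e' with
    | _ a b =>
    rw [SimpleGraph.mem_edgeSet, hH', SimpleGraph.sdiff_adj,
      SimpleGraph.fromEdgeSet_adj] at he'
    rw [Finset.mem_erase, SimpleGraph.mem_edgeFinset]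
    refine ⟨fun hh => he'.2 ⟨hh, he'.1.ne⟩, he'.1⟩
  have hle := connected_card_le_edges H' hconn'
  have h1 : H'.edgeFinset.card ≤ (H.edgeFinset.erase s(x, y)).card :=
    Finset.card_le_card hsub
  have h2 : (H.edgeFinset.erase s(x, y)).card = H.edgeFinset.card - 1 :=
    Finset.card_erase_of_mem (SimpleGraph.mem_edgeFinset.2 he)
  have h3 : 0 < H.edgeFinset.card :=
    Finset.card_pos.2 ⟨s(x, y), SimpleGraph.mem_edgeFinset.2 he⟩
  omega

private def nbrs {V W : Type} [Fintype V] [Fintype W] (G : SimpleGraph V) (H : SimpleGraph W)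
    [DecidableRel G.Adj] [DecidableRel H.Adj] : V ⊕ W → Multiset (V ⊕ W)
  | Sum.inl x => (G.neighborFinset x).val.map Sum.inl
  | Sum.inr y => (H.neighborFinset y).val.map Sum.inr

private def cc {V W L : Type} [Fintype V] [Fintype W] (G : SimpleGraph V) (H : SimpleGraph W)
    [DecidableRel G.Adj] [DecidableRel H.Adj] (labG : V → L) (labH : W → L) :
    (r : ℕ) → V ⊕ W → CRColor L r := fun r z =>
  match z with
  | Sum.inl x => crIter G labG r x
  | Sum.inr y => crIter H labH r y

private lemma cc_succ {V W L : Type} [Fintype V] [Fintype W] (G : SimpleGraph V)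
    (H : SimpleGraph W) [DecidableRel G.Adj] [DecidableRel H.Adj] (labG : V → L)
    (labH : W → L) (r : ℕ) (z : V ⊕ W) :
    cc G H labG labH (r + 1) z
      = (cc G H labG labH r z, (nbrs G H z).map (cc G H labG labH r)) := by
  cases z with
  | inl x =>
    show crIter G labG (r+1) x = _
    rw [crIter]
    simp only [cc, nbrs, Multiset.map_map]
    rfl
  | inr y =>
    show crIter H labH (r+1) y = _
    rw [crIter]
    simp only [cc, nbrs, Multiset.map_map]
    rfl


set_option maxHeartbeats 1000000 in
/-- If `G^u` is a pointed finite labeled tree while the pointed finite labeled connected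
graph `H^v` contains a cycle, then `G^u` and `H^v` are not color-refinement equivalent:
after some number `r` of rounds of color refinement (from the labeling-based initial
colorings) the distinguished nodes receive different colors. -/
theorem tree_cycle_not_cr_equivalent {V W L : Type} [Fintype V] [Fintype W]
    (G : SimpleGraph V) (H : SimpleGraph W) [DecidableRel G.Adj] [DecidableRel H.Adj]
    (labG : V → L) (labH : W → L) (u : V) (v : W)
    (hG : G.IsTree) (hHconn : H.Connected) (hHcyc : ¬ H.IsAcyclic) :
    ∃ r : ℕ, crIter G labG r u ≠ crIter H labH r v := by
  classical
  by_contra hcon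
  push_neg at hcon
  set c := cc G H labG labH with hc
  set N := nbrs G H with hN
  -- Step 1: a stable round exists
  have exists_stable : ∃ r, ∀ x y : V ⊕ W, c r x = c r y → c (r + 1) x = c (r + 1) y := by
    by_contra hns
    push_neg at hns
    set S : ℕ → Finset ((V ⊕ W) × (V ⊕ W)) :=
      fun r => Finset.univ.filter (fun p => c r p.1 = c r p.2) with hS
    have key : ∀ r z, c r z = (c (r + 1) z).1 := fun r z => by rw [hc, cc_succ]
    have hsub : ∀ r, S (r + 1) ⊆ S r := by
      intro r p hp
      rw [hS, Finset.mem_filter] at hp ⊢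
      exact ⟨hp.1, by rw [key r p.1, key r p.2, hp.2]⟩
    have hlt : ∀ r, (S (r + 1)).card < (S r).card := by
      intro r
      obtain ⟨x, y, hxy, hne⟩ := hns r
      refine Finset.card_lt_card ⟨hsub r, fun hh => hne ?_⟩
      have := hh (by rw [hS]; exact Finset.mem_filter.2 ⟨Finset.mem_univ (x, y), hxy⟩)
      rw [hS, Finset.mem_filter] at this
      exact this.2
    have hgrow : ∀ r, (S r).card + r ≤ (S 0).card := by
      intro r
      induction r with
      | zero => omega
      | succ n ih => have := hlt n; omega
    have := hgrow ((S 0).card + 1)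
    omega
  obtain ⟨r0, hstab⟩ := exists_stable
  set κ := c r0 with hκ
  have P1 : κ (Sum.inl u) = κ (Sum.inr v) := hcon r0
  have P2 : ∀ x y, κ x = κ y → (N x).map κ = (N y).map κ := by
    intro x y h
    have h2 := hstab x y h
    rw [hc, cc_succ, cc_succ] at h2
    exact congrArg Prod.snd h2
  -- counting setup
  set nV : CRColor L r0 → ℕ :=
    fun a => (Finset.univ.filter (fun x : V => κ (Sum.inl x) = a)).card with hnV
  set nW : CRColor L r0 → ℕ :=
    fun a => (Finset.univ.filter (fun y : W => κ (Sum.inr y) = a)).card with hnW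
  set D : V ⊕ W → CRColor L r0 → ℕ :=
    fun z a => Multiset.count a ((N z).map κ) with hD
  have Dwd : ∀ z z' a, κ z = κ z' → D z a = D z' a := by
    intro z z' a h
    rw [hD]
    simp only
    rw [P2 z z' h]
  have hDG : ∀ (x : V) (b : CRColor L r0),
      D (Sum.inl x) b = ∑ z : V, if G.Adj x z ∧ κ (Sum.inl z) = b then 1 else 0 := by
    intro x b
    have hNx : N (Sum.inl x) = (G.neighborFinset x).val.map Sum.inl := by rw [hN]; rfl
    rw [hD]
    simp only
    rw [hNx, Multiset.map_map, Multiset.count_map]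
    simp only [Function.comp_apply]
    have : Multiset.filter (fun z => b = κ (Sum.inl z)) (G.neighborFinset x).val
        = ((G.neighborFinset x).filter (fun z => b = κ (Sum.inl z))).val := by
      rw [Finset.filter_val]
    rw [this]
    show ((G.neighborFinset x).filter (fun z => b = κ (Sum.inl z))).card = _
    rw [Finset.card_filter, SimpleGraph.neighborFinset_eq_filter, Finset.sum_filter]
    refine Finset.sum_congr rfl fun z _ => ?_
    by_cases h2 : κ (Sum.inl z) = b
    · simp [h2]
    · have h2' : ¬ b = κ (Sum.inl z) := fun hh => h2 hh.symm
      simp [h2, h2']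
  have hDH : ∀ (y : W) (b : CRColor L r0),
      D (Sum.inr y) b = ∑ z : W, if H.Adj y z ∧ κ (Sum.inr z) = b then 1 else 0 := by
    intro y b
    have hNy : N (Sum.inr y) = (H.neighborFinset y).val.map Sum.inr := by rw [hN]; rfl
    rw [hD]
    simp only
    rw [hNy, Multiset.map_map, Multiset.count_map]
    simp only [Function.comp_apply]
    have : Multiset.filter (fun z => b = κ (Sum.inr z)) (H.neighborFinset y).val
        = ((H.neighborFinset y).filter (fun z => b = κ (Sum.inr z))).val := by
      rw [Finset.filter_val]
    rw [this]
    show ((H.neighborFinset y).filter (fun z => b = κ (Sum.inr z))).card = _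
    rw [Finset.card_filter, SimpleGraph.neighborFinset_eq_filter, Finset.sum_filter]
    refine Finset.sum_congr rfl fun z _ => ?_
    by_cases h2 : κ (Sum.inr z) = b
    · simp [h2]
    · have h2' : ¬ b = κ (Sum.inr z) := fun hh => h2 hh.symm
      simp [h2, h2']
  have hformG : ∀ a b : CRColor L r0,
      (∑ x : V, if κ (Sum.inl x) = a then D (Sum.inl x) b else 0)
        = ∑ x : V, ∑ z : V,
            if G.Adj x z ∧ κ (Sum.inl x) = a ∧ κ (Sum.inl z) = b then 1 else 0 := by
    intro a b
    refine Finset.sum_congr rfl fun x _ => ?_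
    rw [hDG x b]
    by_cases hx : κ (Sum.inl x) = a
    · rw [if_pos hx]
      refine Finset.sum_congr rfl fun z _ => ?_
      simp [hx]
    · rw [if_neg hx]
      symm
      refine Finset.sum_eq_zero fun z _ => ?_
      simp [hx]
  have hformH : ∀ a b : CRColor L r0,
      (∑ y : W, if κ (Sum.inr y) = a then D (Sum.inr y) b else 0)
        = ∑ y : W, ∑ z : W,
            if H.Adj y z ∧ κ (Sum.inr y) = a ∧ κ (Sum.inr z) = b then 1 else 0 := by
    intro a b
    refine Finset.sum_congr rfl fun y _ => ?_
    rw [hDH y b]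
    by_cases hy : κ (Sum.inr y) = a
    · rw [if_pos hy]
      refine Finset.sum_congr rfl fun z _ => ?_
      simp [hy]
    · rw [if_neg hy]
      symm
      refine Finset.sum_eq_zero fun z _ => ?_
      simp [hy]
  have sumG : ∀ a b : CRColor L r0,
      (∑ x : V, if κ (Sum.inl x) = a then D (Sum.inl x) b else 0)
        = ∑ x : V, if κ (Sum.inl x) = b then D (Sum.inl x) a else 0 := by
    intro a b
    rw [hformG a b, hformG b a, Finset.sum_comm]
    refine Finset.sum_congr rfl fun x _ => Finset.sum_congr rfl fun z _ => ?_
    refine if_congr ?_ rfl rfl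
    constructor
    · rintro ⟨h1, h2, h3⟩; exact ⟨h1.symm, h3, h2⟩
    · rintro ⟨h1, h2, h3⟩; exact ⟨h1.symm, h3, h2⟩
  have sumH : ∀ a b : CRColor L r0,
      (∑ y : W, if κ (Sum.inr y) = a then D (Sum.inr y) b else 0)
        = ∑ y : W, if κ (Sum.inr y) = b then D (Sum.inr y) a else 0 := by
    intro a b
    rw [hformH a b, hformH b a, Finset.sum_comm]
    refine Finset.sum_congr rfl fun y _ => Finset.sum_congr rfl fun z _ => ?_
    refine if_congr ?_ rfl rfl
    constructor
    · rintro ⟨h1, h2, h3⟩; exact ⟨h1.symm, h3, h2⟩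
    · rintro ⟨h1, h2, h3⟩; exact ⟨h1.symm, h3, h2⟩
  have extractG : ∀ (a b : CRColor L r0) (z0 : V ⊕ W), κ z0 = a →
      (∑ x : V, if κ (Sum.inl x) = a then D (Sum.inl x) b else 0) = nV a * D z0 b := by
    intro a b z0 h0
    rw [← Finset.sum_filter]
    calc (∑ x ∈ Finset.univ.filter (fun x : V => κ (Sum.inl x) = a), D (Sum.inl x) b)
        = ∑ _x ∈ Finset.univ.filter (fun x : V => κ (Sum.inl x) = a), D z0 b :=
          Finset.sum_congr rfl fun x hx =>
            Dwd _ _ _ (by rw [(Finset.mem_filter.1 hx).2, h0])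
      _ = nV a * D z0 b := by rw [Finset.sum_const, smul_eq_mul, hnV]
  have extractH : ∀ (a b : CRColor L r0) (z0 : V ⊕ W), κ z0 = a →
      (∑ y : W, if κ (Sum.inr y) = a then D (Sum.inr y) b else 0) = nW a * D z0 b := by
    intro a b z0 h0
    rw [← Finset.sum_filter]
    calc (∑ y ∈ Finset.univ.filter (fun y : W => κ (Sum.inr y) = a), D (Sum.inr y) b)
        = ∑ _y ∈ Finset.univ.filter (fun y : W => κ (Sum.inr y) = a), D z0 b :=
          Finset.sum_congr rfl fun y hy =>
            Dwd _ _ _ (by rw [(Finset.mem_filter.1 hy).2, h0])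
      _ = nW a * D z0 b := by rw [Finset.sum_const, smul_eq_mul, hnW]
  have pairG : ∀ x z : V, G.Adj x z →
      nV (κ (Sum.inl x)) * nW (κ (Sum.inl z))
        = nV (κ (Sum.inl z)) * nW (κ (Sum.inl x)) := by
    intro x z hadj
    have e1 : nV (κ (Sum.inl x)) * D (Sum.inl x) (κ (Sum.inl z))
        = nV (κ (Sum.inl z)) * D (Sum.inl z) (κ (Sum.inl x)) := by
      rw [← extractG _ _ (Sum.inl x) rfl, ← extractG _ _ (Sum.inl z) rfl]
      exact sumG _ _
    have e2 : nW (κ (Sum.inl x)) * D (Sum.inl x) (κ (Sum.inl z))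
        = nW (κ (Sum.inl z)) * D (Sum.inl z) (κ (Sum.inl x)) := by
      rw [← extractH _ _ (Sum.inl x) rfl, ← extractH _ _ (Sum.inl z) rfl]
      exact sumH _ _
    have hDab : 0 < D (Sum.inl x) (κ (Sum.inl z)) := by
      rw [hD]
      simp only
      refine Multiset.count_pos.2 (Multiset.mem_map.2 ⟨Sum.inl z, ?_, rfl⟩)
      rw [hN]
      show Sum.inl z ∈ (G.neighborFinset x).val.map Sum.inl
      exact Multiset.mem_map.2 ⟨z, by simp [hadj], rfl⟩
    have hDba : 0 < D (Sum.inl z) (κ (Sum.inl x)) := by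
      rw [hD]
      simp only
      refine Multiset.count_pos.2 (Multiset.mem_map.2 ⟨Sum.inl x, ?_, rfl⟩)
      rw [hN]
      show Sum.inl x ∈ (G.neighborFinset z).val.map Sum.inl
      exact Multiset.mem_map.2 ⟨x, by simp [hadj.symm], rfl⟩
    refine Nat.eq_of_mul_eq_mul_right (Nat.mul_pos hDab hDba) ?_
    calc (nV (κ (Sum.inl x)) * nW (κ (Sum.inl z)))
          * (D (Sum.inl x) (κ (Sum.inl z)) * D (Sum.inl z) (κ (Sum.inl x)))
        = (nV (κ (Sum.inl x)) * D (Sum.inl x) (κ (Sum.inl z)))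
          * (nW (κ (Sum.inl z)) * D (Sum.inl z) (κ (Sum.inl x))) := by ring
      _ = (nV (κ (Sum.inl z)) * D (Sum.inl z) (κ (Sum.inl x)))
          * (nW (κ (Sum.inl x)) * D (Sum.inl x) (κ (Sum.inl z))) := by rw [e1, ← e2]
      _ = (nV (κ (Sum.inl z)) * nW (κ (Sum.inl x)))
          * (D (Sum.inl x) (κ (Sum.inl z)) * D (Sum.inl z) (κ (Sum.inl x))) := by ring
  have pairH : ∀ y z : W, H.Adj y z →
      nV (κ (Sum.inr y)) * nW (κ (Sum.inr z))
        = nV (κ (Sum.inr z)) * nW (κ (Sum.inr y)) := by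
    intro y z hadj
    have e1 : nV (κ (Sum.inr y)) * D (Sum.inr y) (κ (Sum.inr z))
        = nV (κ (Sum.inr z)) * D (Sum.inr z) (κ (Sum.inr y)) := by
      rw [← extractG _ _ (Sum.inr y) rfl, ← extractG _ _ (Sum.inr z) rfl]
      exact sumG _ _
    have e2 : nW (κ (Sum.inr y)) * D (Sum.inr y) (κ (Sum.inr z))
        = nW (κ (Sum.inr z)) * D (Sum.inr z) (κ (Sum.inr y)) := by
      rw [← extractH _ _ (Sum.inr y) rfl, ← extractH _ _ (Sum.inr z) rfl]
      exact sumH _ _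
    have hDab : 0 < D (Sum.inr y) (κ (Sum.inr z)) := by
      rw [hD]
      simp only
      refine Multiset.count_pos.2 (Multiset.mem_map.2 ⟨Sum.inr z, ?_, rfl⟩)
      rw [hN]
      show Sum.inr z ∈ (H.neighborFinset y).val.map Sum.inr
      exact Multiset.mem_map.2 ⟨z, by simp [hadj], rfl⟩
    have hDba : 0 < D (Sum.inr z) (κ (Sum.inr y)) := by
      rw [hD]
      simp only
      refine Multiset.count_pos.2 (Multiset.mem_map.2 ⟨Sum.inr y, ?_, rfl⟩)
      rw [hN]
      show Sum.inr y ∈ (H.neighborFinset z).val.map Sum.inr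
      exact Multiset.mem_map.2 ⟨y, by simp [hadj.symm], rfl⟩
    refine Nat.eq_of_mul_eq_mul_right (Nat.mul_pos hDab hDba) ?_
    calc (nV (κ (Sum.inr y)) * nW (κ (Sum.inr z)))
          * (D (Sum.inr y) (κ (Sum.inr z)) * D (Sum.inr z) (κ (Sum.inr y)))
        = (nV (κ (Sum.inr y)) * D (Sum.inr y) (κ (Sum.inr z)))
          * (nW (κ (Sum.inr z)) * D (Sum.inr z) (κ (Sum.inr y))) := by ring
      _ = (nV (κ (Sum.inr z)) * D (Sum.inr z) (κ (Sum.inr y)))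
          * (nW (κ (Sum.inr y)) * D (Sum.inr y) (κ (Sum.inr z))) := by rw [e1, ← e2]
      _ = (nV (κ (Sum.inr z)) * nW (κ (Sum.inr y)))
          * (D (Sum.inr y) (κ (Sum.inr z)) * D (Sum.inr z) (κ (Sum.inr y))) := by ring
  -- the stable color of the roots
  set a0 := κ (Sum.inl u) with ha0
  have hv0 : κ (Sum.inr v) = a0 := P1.symm
  have hnVa0 : 0 < nV a0 := by
    rw [hnV]
    exact Finset.card_pos.2 ⟨u, Finset.mem_filter.2 ⟨Finset.mem_univ u, rfl⟩⟩
  have hnWa0 : 0 < nW a0 := by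
    rw [hnW]
    exact Finset.card_pos.2 ⟨v, Finset.mem_filter.2 ⟨Finset.mem_univ v, hv0⟩⟩
  set Good : CRColor L r0 → Prop :=
    fun a => nV a * nW a0 = nW a * nV a0 ∧ 0 < nV a ∧ 0 < nW a with hGoodDef
  have base : Good a0 := ⟨Nat.mul_comm _ _, hnVa0, hnWa0⟩
  have stepCommon : ∀ a b : CRColor L r0, nV a * nW b = nV b * nW a →
      0 < nW a → Good a → (0 < nV b ∨ 0 < nW b) → Good b := by
    intro a b hp hWa ⟨hid, hVa, _⟩ hpos
    have hVb : 0 < nV b := by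
      rcases hpos with h | h
      · exact h
      · rcases Nat.eq_zero_or_pos (nV b) with h0 | h0
        · exfalso
          have : nV a * nW b = 0 := by rw [hp, h0, Nat.zero_mul]
          rcases Nat.mul_eq_zero.1 this with h1 | h1 <;> omega
        · exact h0
    have hWb : 0 < nW b := by
      rcases Nat.eq_zero_or_pos (nW b) with h0 | h0
      · exfalso
        have : nV b * nW a = 0 := by rw [← hp, h0, Nat.mul_zero]
        rcases Nat.mul_eq_zero.1 this with h1 | h1 <;> omega
      · exact h0
    refine ⟨?_, hVb, hWb⟩
    refine Nat.eq_of_mul_eq_mul_right hWa ?_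
    calc nV b * nW a0 * nW a = nV b * nW a * nW a0 := by ring
      _ = nV a * nW b * nW a0 := by rw [hp]
      _ = nW b * (nV a * nW a0) := by ring
      _ = nW b * (nW a * nV a0) := by rw [hid]
      _ = nW b * nV a0 * nW a := by ring
  have goodV : ∀ x : V, Good (κ (Sum.inl x)) := by
    have hstep : ∀ {x y : V} (_ : G.Walk x y), Good (κ (Sum.inl x)) → Good (κ (Sum.inl y)) := by
      intro x y p
      induction p with
      | nil => exact id
      | cons h q ih =>
        intro hx
        refine ih (stepCommon _ _ (pairG _ _ h) hx.2.2 hx (Or.inl ?_))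
        rw [hnV]
        exact Finset.card_pos.2 ⟨_, Finset.mem_filter.2 ⟨Finset.mem_univ _, rfl⟩⟩
    intro x
    obtain ⟨p⟩ := hG.isConnected.preconnected u x
    exact hstep p base
  have goodW : ∀ y : W, Good (κ (Sum.inr y)) := by
    have hstep : ∀ {x y : W} (_ : H.Walk x y), Good (κ (Sum.inr x)) → Good (κ (Sum.inr y)) := by
      intro x y p
      induction p with
      | nil => exact id
      | cons h q ih =>
        intro hx
        refine ih (stepCommon _ _ (pairH _ _ h) hx.2.2 hx (Or.inr ?_))
        rw [hnW]
        exact Finset.card_pos.2 ⟨_, Finset.mem_filter.2 ⟨Finset.mem_univ _, rfl⟩⟩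
    intro y
    obtain ⟨p⟩ := hHconn.preconnected v y
    exact hstep p (hv0 ▸ base)
  -- the two color images coincide
  set A := Finset.univ.image (fun x : V => κ (Sum.inl x)) with hA
  set B := Finset.univ.image (fun y : W => κ (Sum.inr y)) with hB
  have hABeq : A = B := by
    ext a
    rw [hA, hB]
    simp only [Finset.mem_image, Finset.mem_univ, true_and]
    constructor
    · rintro ⟨x, rfl⟩
      have h := (goodV x).2.2
      rw [hnW] at h
      obtain ⟨y, hy⟩ := Finset.card_pos.1 h
      exact ⟨y, (Finset.mem_filter.1 hy).2⟩
    · rintro ⟨y, rfl⟩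
      have h := (goodW y).2.1
      rw [hnV] at h
      obtain ⟨x, hx⟩ := Finset.card_pos.1 h
      exact ⟨x, (Finset.mem_filter.1 hx).2⟩
  -- color degree
  set dgc : CRColor L r0 → ℤ :=
    fun a => if h : ∃ z : V ⊕ W, κ z = a then (((N h.choose).card : ℕ) : ℤ) else 0 with hdgcDef
  have hdg : ∀ z : V ⊕ W, dgc (κ z) = (((N z).card : ℕ) : ℤ) := by
    intro z
    rw [hdgcDef]
    simp only
    rw [dif_pos ⟨z, rfl⟩]
    have h2 := P2 _ z (Exists.choose_spec (⟨z, rfl⟩ : ∃ z', κ z' = κ z))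
    have h3 := congrArg Multiset.card h2
    rw [Multiset.card_map, Multiset.card_map] at h3
    exact_mod_cast congrArg (fun n : ℕ => (n : ℤ)) h3
  have grpV : (∑ x : V, (dgc (κ (Sum.inl x)) - 2)) = ∑ a ∈ A, (nV a : ℤ) * (dgc a - 2) := by
    rw [hA, Finset.sum_comp (fun a => dgc a - 2) (fun x : V => κ (Sum.inl x))]
    refine Finset.sum_congr rfl fun a _ => ?_
    rw [hnV, nsmul_eq_mul]
  have grpW : (∑ y : W, (dgc (κ (Sum.inr y)) - 2)) = ∑ a ∈ B, (nW a : ℤ) * (dgc a - 2) := by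
    rw [hB, Finset.sum_comp (fun a => dgc a - 2) (fun y : W => κ (Sum.inr y))]
    refine Finset.sum_congr rfl fun a _ => ?_
    rw [hnW, nsmul_eq_mul]
  have key2 : (nW a0 : ℤ) * (∑ x : V, (dgc (κ (Sum.inl x)) - 2))
      = (nV a0 : ℤ) * (∑ y : W, (dgc (κ (Sum.inr y)) - 2)) := by
    rw [grpV, grpW, ← hABeq, Finset.mul_sum, Finset.mul_sum]
    refine Finset.sum_congr rfl fun a ha => ?_
    rw [hA] at ha
    simp only [Finset.mem_image, Finset.mem_univ, true_and] at ha
    obtain ⟨x, rfl⟩ := ha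
    have hgood : (nV (κ (Sum.inl x)) : ℤ) * (nW a0 : ℤ)
        = (nW (κ (Sum.inl x)) : ℤ) * (nV a0 : ℤ) := by
      exact_mod_cast congrArg (fun n : ℕ => (n : ℤ)) (goodV x).1
    linear_combination (dgc (κ (Sum.inl x)) - 2) * hgood
  -- evaluate both sides
  have hdegG : ∀ x : V, dgc (κ (Sum.inl x)) = (G.degree x : ℤ) := by
    intro x
    rw [hdg (Sum.inl x), hN]
    show (((Multiset.map Sum.inl (G.neighborFinset x).val).card : ℕ) : ℤ) = _
    rw [Multiset.card_map]
    rfl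
  have hdegH : ∀ y : W, dgc (κ (Sum.inr y)) = (H.degree y : ℤ) := by
    intro y
    rw [hdg (Sum.inr y), hN]
    show (((Multiset.map Sum.inr (H.neighborFinset y).val).card : ℕ) : ℤ) = _
    rw [Multiset.card_map]
    rfl
  have hVsum : (∑ x : V, (dgc (κ (Sum.inl x)) - 2)) = -2 := by
    have h1 : ∑ x : V, G.degree x = 2 * G.edgeFinset.card :=
      SimpleGraph.sum_degrees_eq_twice_card_edges G
    have h2 : G.edgeFinset.card + 1 = Fintype.card V := hG.card_edgeFinset
    have h1' : (∑ x : V, (G.degree x : ℤ)) = 2 * (G.edgeFinset.card : ℤ) := by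
      exact_mod_cast congrArg (fun n : ℕ => (n : ℤ)) h1
    have h2' : (G.edgeFinset.card : ℤ) + 1 = (Fintype.card V : ℤ) := by
      exact_mod_cast congrArg (fun n : ℕ => (n : ℤ)) h2
    calc (∑ x : V, (dgc (κ (Sum.inl x)) - 2))
        = ∑ x : V, ((G.degree x : ℤ) - 2) :=
          Finset.sum_congr rfl fun x _ => by rw [hdegG]
      _ = (∑ x : V, (G.degree x : ℤ)) - (Fintype.card V : ℤ) * 2 := by
          rw [Finset.sum_sub_distrib, Finset.sum_const, Finset.card_univ, nsmul_eq_mul]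
      _ = -2 := by rw [h1']; linarith
  have hWsum : (0 : ℤ) ≤ ∑ y : W, (dgc (κ (Sum.inr y)) - 2) := by
    have h1 : ∑ y : W, H.degree y = 2 * H.edgeFinset.card :=
      SimpleGraph.sum_degrees_eq_twice_card_edges H
    have h2 : Fintype.card W ≤ H.edgeFinset.card :=
      cyclic_card_le_edges H hHconn hHcyc
    have h1' : (∑ y : W, (H.degree y : ℤ)) = 2 * (H.edgeFinset.card : ℤ) := by
      exact_mod_cast congrArg (fun n : ℕ => (n : ℤ)) h1
    have h2' : (Fintype.card W : ℤ) ≤ (H.edgeFinset.card : ℤ) := by exact_mod_cast h2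
    calc (0 : ℤ) ≤ (∑ y : W, (H.degree y : ℤ)) - (Fintype.card W : ℤ) * 2 := by
          rw [h1']; linarith
      _ = ∑ y : W, ((H.degree y : ℤ) - 2) := by
          rw [Finset.sum_sub_distrib, Finset.sum_const, Finset.card_univ, nsmul_eq_mul]
      _ = ∑ y : W, (dgc (κ (Sum.inr y)) - 2) :=
          Finset.sum_congr rfl fun y _ => by rw [hdegH]
  rw [hVsum] at key2
  have hWa0' : (0 : ℤ) < (nW a0 : ℤ) := by exact_mod_cast hnWa0
  have hVa0' : (0 : ℤ) ≤ (nV a0 : ℤ) := Int.natCast_nonneg _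
  nlinarith [mul_nonneg hVa0' hWsum]
end
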